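/- arXiv:2104.01186 — 6 statements merged into one kernel-verified Lean document; each statement's English description precedes it below -/
import Mathlib

section
/- The map replacing, in a Dyck path avoiding the factor UUU, each occurrence of UUD by a single up step and each remaining UD by a flat step, is a bijection from Dyck paths of semilength n avoiding UUU to Motzkin paths of length n. -/
/-- Every prefix of the path has nonnegative sum (the path stays weakly above the x-axis). -/
def NonnegPrefixes (w : List ℤ) : Prop := ∀ p ∈ w.inits, 0 ≤ p.sum

/-- A Dyck word: steps U = 1 and D = -1, nonnegative prefixes, ending at height 0. -/
def IsDyckWord (w : List ℤ) : Prop :=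
  (∀ s ∈ w, s = 1 ∨ s = -1) ∧ NonnegPrefixes w ∧ w.sum = 0

/-- A Motzkin path: steps U = 1, F = 0, D = -1, nonnegative prefixes, ending at height 0. -/
def IsMotzkinWord (w : List ℤ) : Prop :=
  (∀ s ∈ w, s = 1 ∨ s = 0 ∨ s = -1) ∧ NonnegPrefixes w ∧ w.sum = 0

/-- A Dyck meander with catastrophes: steps U = 1, D = -1, D_i = -i (i ≥ 2),
nonnegative, and every catastrophe step D_i (i ≥ 2) lands exactly at height 0. -/
def IsDyckMeanderCat (w : List ℤ) : Prop :=
  (∀ s ∈ w, s = 1 ∨ s ≤ -1) ∧ NonnegPrefixes w ∧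
    ∀ i, i < w.length → w.getD i 0 ≤ -2 → (w.take (i+1)).sum = 0

/-- A Motzkin meander with catastrophes: steps U = 1, F = 0, D = -1, D_i = -i (i ≥ 2),
nonnegative, every catastrophe landing exactly at height 0. -/
def IsMotzkinMeanderCat (w : List ℤ) : Prop :=
  (∀ s ∈ w, s ≤ 1) ∧ NonnegPrefixes w ∧
    ∀ i, i < w.length → w.getD i 0 ≤ -2 → (w.take (i+1)).sum = 0

def IsDyckExcursionCat (w : List ℤ) : Prop := IsDyckMeanderCat w ∧ w.sum = 0

def IsMotzkinExcursionCat (w : List ℤ) : Prop := IsMotzkinMeanderCat w ∧ w.sum = 0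

/-- The factor `pat` occurs in `w` starting at position `i`. -/
def OccursAt (pat w : List ℤ) (i : ℕ) : Prop := pat <+: w.drop i

/-- `w` has no occurrence of the factor `pat`. -/
def Avoids (pat w : List ℤ) : Prop := ∀ i, ¬ OccursAt pat w i

/-- `w` has no occurrence of `pat` starting at height h > 0. -/
def AvoidsAtPosHeight (pat w : List ℤ) : Prop :=
  ∀ i, OccursAt pat w i → (w.take i).sum ≤ 0

/-- `w` has no occurrence of `pat` starting at height h ≥ 2. -/
def AvoidsAtHeightGe2 (pat w : List ℤ) : Prop :=
  ∀ i, OccursAt pat w i → (w.take i).sum < 2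

def pUUU : List ℤ := [1, 1, 1]
def pDUD : List ℤ := [-1, 1, -1]
def pUUD : List ℤ := [1, 1, -1]
def pUD : List ℤ := [1, -1]
def pDU : List ℤ := [-1, 1]

/-- The map replacing each occurrence of UUD by an up step U and each remaining UD
by a flat step F (reading greedily from the left), from Dyck words to Motzkin words. -/
def dyckToMotzkin : List ℤ → List ℤ
  | 1 :: 1 :: -1 :: rest => 1 :: dyckToMotzkin rest
  | 1 :: -1 :: rest => 0 :: dyckToMotzkin rest
  | x :: rest => x :: dyckToMotzkin rest
  | [] => []

/- ### Auxiliary machinery -/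

/-- One step of the inverse map: U ↦ UUD, F ↦ UD, D ↦ D. -/
def mStep (x : ℤ) : List ℤ := if x = 1 then [1, 1, -1] else if x = 0 then [1, -1] else [x]

/-- The inverse map, from Motzkin words to Dyck words. -/
def mToD : List ℤ → List ℤ
  | [] => []
  | s :: r => mStep s ++ mToD r

lemma mStep_one : mStep 1 = [1, 1, -1] := by norm_num [mStep]
lemma mStep_zero : mStep 0 = [1, -1] := by norm_num [mStep]
lemma mStep_neg : mStep (-1) = [-1] := by norm_num [mStep]

lemma mToD_cons (s : ℤ) (r : List ℤ) : mToD (s :: r) = mStep s ++ mToD r := rfl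

lemma mToD_nil : mToD [] = [] := rfl

lemma sum_mStep (x : ℤ) : (mStep x).sum = x := by
  unfold mStep
  split_ifs with h1 h2
  · simp [h1]
  · simp [h2]
  · simp

lemma sum_mToD (m : List ℤ) : (mToD m).sum = m.sum := by
  induction m with
  | nil => rfl
  | cons s r ih => simp [mToD_cons, sum_mStep, ih]

lemma mToD_append (a b : List ℤ) : mToD (a ++ b) = mToD a ++ mToD b := by
  induction a with
  | nil => rfl
  | cons s r ih => simp [mToD_cons, ih]

lemma f_uud (l : List ℤ) : dyckToMotzkin (1 :: 1 :: -1 :: l) = 1 :: dyckToMotzkin l := rfl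
lemma f_ud (l : List ℤ) : dyckToMotzkin (1 :: -1 :: l) = 0 :: dyckToMotzkin l := rfl
lemma f_d (l : List ℤ) : dyckToMotzkin (-1 :: l) = -1 :: dyckToMotzkin l := rfl

/-- `dyckToMotzkin` is a left inverse of `mToD`. -/
lemma f_mToD (m : List ℤ) (hm : ∀ s ∈ m, s = 1 ∨ s = 0 ∨ s = -1) :
    dyckToMotzkin (mToD m) = m := by
  induction m with
  | nil => rfl
  | cons s r ih =>
    have hr := fun t ht => hm t (List.mem_cons_of_mem s ht)
    rcases hm s List.mem_cons_self with h | h | h <;> subst h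
    · rw [mToD_cons, mStep_one]; simpa [f_uud] using ih hr
    · rw [mToD_cons, mStep_zero]; simpa [f_ud] using ih hr
    · rw [mToD_cons, mStep_neg]; simpa [f_d] using ih hr

lemma entries_mToD (m : List ℤ) (hm : ∀ s ∈ m, s = 1 ∨ s = 0 ∨ s = -1) :
    ∀ s ∈ mToD m, s = 1 ∨ s = -1 := by
  induction m with
  | nil => simp [mToD]
  | cons s r ih =>
    intro t ht
    rw [mToD_cons, List.mem_append] at ht
    rcases ht with ht | ht
    · rcases hm s List.mem_cons_self with h | h | h <;> subst h
      · rw [mStep_one] at ht; simp at ht; omega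
      · rw [mStep_zero] at ht; simp at ht; omega
      · rw [mStep_neg] at ht; simp at ht; omega
    · exact ih (fun t ht => hm t (List.mem_cons_of_mem s ht)) t ht

lemma len_mToD (m : List ℤ) (hm : ∀ s ∈ m, s = 1 ∨ s = 0 ∨ s = -1) :
    ((mToD m).length : ℤ) = 2 * m.length + m.sum := by
  induction m with
  | nil => rfl
  | cons s r ih =>
    have hr := ih (fun t ht => hm t (List.mem_cons_of_mem s ht))
    rcases hm s List.mem_cons_self with h | h | h <;> subst h <;>
      simp [mToD_cons, mStep_one, mStep_zero, mStep_neg] <;>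
        push_cast at hr ⊢ <;> omega

lemma nonnegPrefixes_iff (w : List ℤ) : NonnegPrefixes w ↔ ∀ k, 0 ≤ (w.take k).sum := by
  constructor
  · intro h k
    exact h _ ((List.mem_inits _ _).2 (List.take_prefix k w))
  · intro h p hp
    obtain ⟨t, rfl⟩ := (List.mem_inits _ _).1 hp
    have := h p.length
    rwa [List.take_left] at this

lemma avoids_tail {pat : List ℤ} {a : ℤ} {l : List ℤ} (h : Avoids pat (a :: l)) :
    Avoids pat l := by
  intro i hi
  exact h (i + 1) (by simpa [OccursAt] using hi)

lemma avoids_cons {a : ℤ} {l : List ℤ} (h0 : ¬ pUUU <+: a :: l) (hl : Avoids pUUU l) :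
    Avoids pUUU (a :: l) := by
  intro i hi
  cases i with
  | zero => exact h0 hi
  | succ j => exact hl j (by simpa [OccursAt] using hi)

lemma not_prefix_neg (a : List ℤ) : ¬ pUUU <+: -1 :: a := by
  simp [pUUU, List.cons_prefix_cons]

lemma not_prefix_one_neg (a : List ℤ) : ¬ pUUU <+: 1 :: -1 :: a := by
  simp [pUUU, List.cons_prefix_cons]

lemma not_prefix_uud (a : List ℤ) : ¬ pUUU <+: 1 :: 1 :: -1 :: a := by
  simp [pUUU, List.cons_prefix_cons]

lemma avoids_mToD (m : List ℤ) (hm : ∀ s ∈ m, s = 1 ∨ s = 0 ∨ s = -1) :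
    Avoids pUUU (mToD m) := by
  induction m with
  | nil => intro i hi; simp [OccursAt, pUUU, mToD_nil] at hi
  | cons s r ih =>
    have hr := ih (fun t ht => hm t (List.mem_cons_of_mem s ht))
    rcases hm s List.mem_cons_self with h | h | h <;> subst h
    · rw [mToD_cons, mStep_one]
      exact avoids_cons (not_prefix_uud _)
        (avoids_cons (not_prefix_one_neg _) (avoids_cons (not_prefix_neg _) hr))
    · rw [mToD_cons, mStep_zero]
      exact avoids_cons (not_prefix_one_neg _) (avoids_cons (not_prefix_neg _) hr)
    · rw [mToD_cons, mStep_neg]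
      exact avoids_cons (not_prefix_neg _) hr

lemma nonneg_mToD (m : List ℤ) (hm : ∀ s ∈ m, s = 1 ∨ s = 0 ∨ s = -1) :
    ∀ h : ℤ, (∀ k, 0 ≤ h + (m.take k).sum) → ∀ k, 0 ≤ h + ((mToD m).take k).sum := by
  induction m with
  | nil => intro h hk k; simpa [mToD_nil] using hk 0
  | cons s r ih =>
    intro h hk k
    have hr := fun t ht => hm t (List.mem_cons_of_mem s ht)
    have h0 : 0 ≤ h := by simpa using hk 0
    have hrec : ∀ k, 0 ≤ (h + s) + (r.take k).sum := by
      intro k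
      have := hk (k + 1)
      rw [List.take_succ_cons] at this
      simpa [add_assoc] using this
    rcases hm s List.mem_cons_self with hs | hs | hs <;> subst hs
    · rw [mToD_cons, mStep_one]
      match k with
      | 0 => simpa using h0
      | 1 => simp; omega
      | 2 => simp; omega
      | (j+3) =>
        simp only [List.cons_append, List.nil_append, List.take_succ_cons, List.sum_cons]
        have := ih hr (h + 1) hrec j
        omega
    · rw [mToD_cons, mStep_zero]
      match k with
      | 0 => simpa using h0
      | 1 => simp; omega
      | (j+2) =>
        simp only [List.cons_append, List.nil_append, List.take_succ_cons, List.sum_cons]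
        have := ih hr (h + 0) hrec j
        omega
    · rw [mToD_cons, mStep_neg]
      match k with
      | 0 => simpa using h0
      | (j+1) =>
        simp only [List.cons_append, List.nil_append, List.take_succ_cons, List.sum_cons]
        have := ih hr (h + -1) hrec j
        omega

lemma nonneg_of_mToD (m : List ℤ) (hg : NonnegPrefixes (mToD m)) : NonnegPrefixes m := by
  rw [nonnegPrefixes_iff]
  intro k
  have hpre : mToD (m.take k) <+: mToD m := by
    refine ⟨mToD (m.drop k), ?_⟩
    rw [← mToD_append, List.take_append_drop]
  have := hg _ ((List.mem_inits _ _).2 hpre)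
  rwa [sum_mToD] at this

lemma getLast?_tail {a : ℤ} {l : List ℤ} (h : (a :: l).getLast? ≠ some 1) :
    l.getLast? ≠ some 1 := by
  cases l with
  | nil => simp
  | cons b t => rwa [List.getLast?_cons_cons] at h

/-- Every UUU-avoiding word over {1,-1} not ending in U is in the image of `mToD`. -/
lemma exists_preimage : ∀ (N : ℕ) (w : List ℤ), w.length ≤ N →
    (∀ s ∈ w, s = 1 ∨ s = -1) → Avoids pUUU w → w.getLast? ≠ some 1 →
    ∃ m, (∀ s ∈ m, s = 1 ∨ s = 0 ∨ s = -1) ∧ mToD m = w := by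
  intro N
  induction N with
  | zero =>
    intro w hw _ _ _
    have : w = [] := List.length_eq_zero_iff.1 (Nat.le_zero.1 hw)
    exact ⟨[], by simp, by simp [this, mToD]⟩
  | succ N ih =>
    intro w hlen hent hav hlast
    match w with
    | [] => exact ⟨[], by simp, rfl⟩
    | s :: r =>
      rcases hent s List.mem_cons_self with hs | hs <;> subst hs
      · -- starts with U
        match r with
        | [] => simp at hlast
        | t :: r' =>
          rcases hent t (by simp) with ht | ht <;> subst ht
          · -- starts with UU
            match r' with
            | [] => simp [List.getLast?_cons_cons] at hlast
            | u :: r'' =>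
              rcases hent u (by simp) with hu | hu <;> subst hu
              · exact absurd (hav 0 ⟨r'', rfl⟩) (fun h => h)
              · -- UUD
                obtain ⟨m, hm, hgm⟩ := ih r'' (by simp at hlen ⊢; omega)
                  (fun x hx => hent x (by simp [hx]))
                  (avoids_tail (avoids_tail (avoids_tail hav)))
                  (getLast?_tail (getLast?_tail (getLast?_tail hlast)))
                exact ⟨1 :: m, by simpa using fun x hx => hm x hx,
                  by rw [mToD_cons, mStep_one, hgm]; rfl⟩
          · -- UD
            obtain ⟨m, hm, hgm⟩ := ih r' (by simp at hlen ⊢; omega)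
              (fun x hx => hent x (by simp [hx]))
              (avoids_tail (avoids_tail hav))
              (getLast?_tail (getLast?_tail hlast))
            exact ⟨0 :: m, by simpa using fun x hx => hm x hx,
              by rw [mToD_cons, mStep_zero, hgm]; rfl⟩
      · -- starts with D
        obtain ⟨m, hm, hgm⟩ := ih r (by simp at hlen ⊢; omega)
          (fun x hx => hent x (by simp [hx]))
          (avoids_tail hav)
          (getLast?_tail hlast)
        exact ⟨-1 :: m, by simpa using fun x hx => hm x hx,
          by rw [mToD_cons, mStep_neg, hgm]; rfl⟩

/-- A nonempty Dyck word does not end with an up step. -/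
lemma dyck_getLast {w : List ℤ} (hw : IsDyckWord w) : w.getLast? ≠ some 1 := by
  intro h
  obtain ⟨l', rfl⟩ := List.getLast?_eq_some_iff.1 h
  obtain ⟨-, hpre, hsum⟩ := hw
  have h1 : 0 ≤ l'.sum := by
    rw [nonnegPrefixes_iff] at hpre
    have := hpre l'.length
    rwa [List.take_left] at this
  simp at hsum
  omega

/-- Main decomposition: a Dyck word avoiding UUU has a Motzkin preimage. -/
lemma dyck_decomp {w : List ℤ} (hw : IsDyckWord w) (hav : Avoids pUUU w) :
    ∃ m, IsMotzkinWord m ∧ mToD m = w ∧ dyckToMotzkin w = m ∧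
      (w.length : ℤ) = 2 * m.length := by
  obtain ⟨m, hm, rfl⟩ :=
    exists_preimage w.length w le_rfl hw.1 hav (dyck_getLast hw)
  have hsum : m.sum = 0 := by rw [← sum_mToD]; exact hw.2.2
  have hlen := len_mToD m hm
  exact ⟨m, ⟨hm, nonneg_of_mToD m hw.2.1, hsum⟩, rfl, f_mToD m hm, by omega⟩

/-- Replacing each UUD by U and each remaining UD by F is a bijection from Dyck paths
of semilength n avoiding UUU to Motzkin paths of length n. -/
theorem stmt_10 (n : ℕ) :
    Set.BijOn dyckToMotzkin
      {w | IsDyckWord w ∧ w.length = 2 * n ∧ Avoids pUUU w}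
      {w | IsMotzkinWord w ∧ w.length = n} := by
  refine ⟨?_, ?_, ?_⟩
  · -- MapsTo
    rintro w ⟨hw, hlen, hav⟩
    obtain ⟨m, hm, -, hf, hl⟩ := dyck_decomp hw hav
    rw [Set.mem_setOf_eq, hf]
    exact ⟨hm, by omega⟩
  · -- InjOn
    rintro w1 ⟨h1, -, ha1⟩ w2 ⟨h2, -, ha2⟩ heq
    obtain ⟨m1, -, hg1, hf1, -⟩ := dyck_decomp h1 ha1
    obtain ⟨m2, -, hg2, hf2, -⟩ := dyck_decomp h2 ha2
    rw [hf1, hf2] at heq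
    rw [← hg1, ← hg2, heq]
  · -- SurjOn
    rintro m ⟨hm, hlen⟩
    refine ⟨mToD m, ⟨⟨entries_mToD m hm.1, ?_, by rw [sum_mToD]; exact hm.2.2⟩, ?_,
      avoids_mToD m hm.1⟩, f_mToD m hm.1⟩
    · rw [nonnegPrefixes_iff]
      intro k
      have := nonneg_mToD m hm.1 0
        (fun k => by have := (nonnegPrefixes_iff m).1 hm.2.1 k; omega) k
      omega
    · have := len_mToD m hm.1
      have hs := hm.2.2
      omega
end

section
/- There exists a bijection between the set of Motzkin meanders with catastrophes of length n and the set of Dyck paths of semilength n+1 avoiding the factor UUU at height h ≥ 2. -/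
/-- prefix-sum nonnegativity, `take` form -/
def NP (w : List ℤ) : Prop := ∀ k, 0 ≤ (w.take k).sum

instance NP.dec : DecidablePred NP := fun w =>
  decidable_of_iff (∀ k ≤ w.length, 0 ≤ (w.take k).sum) (by
    constructor
    · intro h k
      rcases le_or_gt k w.length with hk | hk
      · exact h k hk
      · rw [List.take_of_length_le hk.le]
        have := h w.length le_rfl
        rwa [List.take_of_length_le le_rfl] at this
    · intro h k _; exact h k)

def McP (w : List ℤ) : Prop :=
  (∀ s ∈ w, s ≤ 1) ∧ NP w ∧ ∀ i < w.length, w.getD i 0 ≤ -2 → (w.take (i+1)).sum = 0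
def EcP (w : List ℤ) : Prop := McP w ∧ w.sum = 0
def NmP (w : List ℤ) : Prop := (∀ s ∈ w, s = 1 ∨ s = 0 ∨ s = -1) ∧ NP w
def MzP (w : List ℤ) : Prop := NmP w ∧ w.sum = 0
def DyP (w : List ℤ) : Prop := (∀ s ∈ w, s = 1 ∨ s = -1) ∧ NP w ∧ w.sum = 0
def AvB (t : ℤ) (w : List ℤ) : Prop :=
  ∀ i, ([1,1,1] : List ℤ) <+: w.drop i → (w.take i).sum < t
def AP (t : ℤ) (w : List ℤ) : Prop := DyP w ∧ AvB t w
def DclP (w : List ℤ) : Prop := AP 0 w ∧ ¬ (([1,1] : List ℤ) <+: w)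

instance McP.dec : DecidablePred McP := fun w => by unfold McP; infer_instance
instance EcP.dec : DecidablePred EcP := fun w => by unfold EcP; infer_instance
instance NmP.dec : DecidablePred NmP := fun w => by unfold NmP; infer_instance
instance MzP.dec : DecidablePred MzP := fun w => by unfold MzP; infer_instance
instance DyP.dec : DecidablePred DyP := fun w => by unfold DyP; infer_instance

lemma AvB_iff_bdd (t : ℤ) (w : List ℤ) :
    AvB t w ↔ ∀ i ∈ Finset.range w.length, ([1,1,1] : List ℤ) <+: w.drop i → (w.take i).sum < t := by
  constructor
  · intro h i _; exact h i
  · intro h i hp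
    rcases lt_or_ge i w.length with hi | hi
    · exact h i (Finset.mem_range.2 hi) hp
    · exfalso
      rw [List.drop_eq_nil_of_le hi] at hp
      have := hp.length_le
      simp at this

instance AvB.dec (t : ℤ) : DecidablePred (AvB t) := fun w =>
  decidable_of_iff _ (AvB_iff_bdd t w).symm
instance AP.dec (t : ℤ) : DecidablePred (AP t) := fun w => by unfold AP; infer_instance
instance DclP.dec : DecidablePred DclP := fun w => by unfold DclP; infer_instance

/-- all words of length n with entries in [-b, 1] -/
noncomputable def WF (b : ℕ) : ℕ → Finset (List ℤ)
| 0 => {[]}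
| (n+1) => ((Finset.Icc (-(b:ℤ)) 1) ×ˢ WF b n).image (fun p => p.1 :: p.2)

lemma mem_WF {b n : ℕ} {w : List ℤ} :
    w ∈ WF b n ↔ w.length = n ∧ ∀ x ∈ w, -(b:ℤ) ≤ x ∧ x ≤ 1 := by
  induction n generalizing w with
  | zero =>
    simp only [WF, Finset.mem_singleton, List.length_eq_zero_iff]
    constructor
    · rintro rfl; simp
    · rintro ⟨rfl, -⟩; rfl
  | succ n ih =>
    simp only [WF, Finset.mem_image, Finset.mem_product, Prod.exists]
    constructor
    · rintro ⟨a, l, ⟨ha, hl⟩, rfl⟩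
      obtain ⟨hlen, hst⟩ := ih.1 hl
      refine ⟨by simp [hlen], ?_⟩
      intro x hx
      rcases List.mem_cons.1 hx with rfl | hx
      · exact Finset.mem_Icc.1 ha
      · exact hst x hx
    · rintro ⟨hlen, hst⟩
      rcases w with _ | ⟨a, l⟩
      · simp at hlen
      · refine ⟨a, l, ⟨Finset.mem_Icc.2 (hst a (by simp)), ih.2 ⟨by simpa using hlen, ?_⟩⟩, rfl⟩
        intro x hx; exact hst x (List.mem_cons_of_mem _ hx)

noncomputable def MS (P : List ℤ → Prop) [DecidablePred P] (n : ℕ) : Finset (List ℤ) := (WF n n).filter P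
noncomputable def cnt (P : List ℤ → Prop) [DecidablePred P] (n : ℕ) : ℕ := (MS P n).card

lemma sum_le_length (l : List ℤ) (h : ∀ s ∈ l, s ≤ 1) : l.sum ≤ l.length := by
  induction l with
  | nil => simp
  | cons a t ih =>
    simp only [List.sum_cons, List.length_cons]
    have := ih (fun s hs => h s (List.mem_cons_of_mem _ hs))
    have ha := h a (by simp)
    push_cast; omega

lemma step_lb {w : List ℤ} (h1 : ∀ s ∈ w, s ≤ 1) (h2 : NP w) :
    ∀ x ∈ w, -(w.length : ℤ) ≤ x := by
  intro x hx
  obtain ⟨p, q, rfl⟩ := List.append_of_mem hx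
  have hk := h2 (p.length + 1)
  have htake : (p ++ x::q).take (p.length+1) = p ++ [x] := by
    rw [List.take_append, List.take_of_length_le (by omega)]
    have : p.length + 1 - p.length = 1 := by omega
    rw [this]
    simp
  rw [htake] at hk
  have h4 : p.sum ≤ (p.length : ℤ) :=
    sum_le_length p (fun s hs => h1 s (by simp [hs]))
  have h5 : 0 ≤ p.sum + x := by simpa using hk
  have h6 : (p ++ x::q).length = p.length + 1 + q.length := by simp [List.length_append]; omega
  rw [h6]
  push_cast
  omega

lemma mem_MS {P : List ℤ → Prop} [DecidablePred P]
    (hP : ∀ w, P w → (∀ s ∈ w, s ≤ 1) ∧ NP w) {n : ℕ} {w : List ℤ} :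
    w ∈ MS P n ↔ P w ∧ w.length = n := by
  unfold MS
  rw [Finset.mem_filter, mem_WF]
  constructor
  · rintro ⟨⟨h1, _⟩, h2⟩; exact ⟨h2, h1⟩
  · rintro ⟨h1, h2⟩
    obtain ⟨hs, hnp⟩ := hP w h1
    refine ⟨⟨h2, fun x hx => ⟨?_, hs x hx⟩⟩, h1⟩
    subst h2
    exact step_lb hs hnp x hx

/-! ### splitting helpers -/

lemma take_app_le {u v : List ℤ} {k : ℕ} (hk : k ≤ u.length) :
    ((u ++ v).take k).sum = (u.take k).sum := by
  rw [List.take_append]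
  have : k - u.length = 0 := by omega
  rw [this]
  simp

lemma take_app_sum (u v : List ℤ) (k : ℕ) :
    ((u ++ v).take (u.length + k)).sum = u.sum + (v.take k).sum := by
  rw [List.take_append, List.take_of_length_le (by omega)]
  have : u.length + k - u.length = k := by omega
  rw [this, List.sum_append]

lemma drop_app_sum (u v : List ℤ) (k : ℕ) :
    (u ++ v).drop (u.length + k) = v.drop k := by
  rw [List.drop_append, List.drop_of_length_le (by omega)]
  have : u.length + k - u.length = k := by omega
  rw [this]
  simp

lemma split_unique {B h : ℤ} {u v u' v' : List ℤ} {s s' : ℤ}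
    (heq : u ++ s :: v = u' ++ s' :: v')
    (hu : ∀ k, B ≤ h + (u.take k).sum) (hu' : ∀ k, B ≤ h + (u'.take k).sum)
    (hs : h + u.sum + s < B) (hs' : h + u'.sum + s' < B) :
    u = u' ∧ s = s' ∧ v = v' := by
  have hlen : u.length = u'.length := by
    by_contra hne
    rcases Nat.lt_or_ge u.length u'.length with hlt | hge
    · have h1 : (u' ++ s' :: v').take (u.length + 1) = u'.take (u.length + 1) := by
        rw [List.take_append]
        have : u.length + 1 - u'.length = 0 := by omega
        rw [this]; simp
      have h2 : (u ++ s :: v).take (u.length + 1) = u ++ [s] := by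
        have h3 : u.length + 1 = u.length + 1 := rfl
        rw [show u.length + 1 = u.length + 1 from rfl, List.take_append,
          List.take_of_length_le (by omega)]
        have : u.length + 1 - u.length = 1 := by omega
        rw [this]; simp
      have := hu' (u.length + 1)
      rw [← h1, ← heq, h2] at this
      rw [List.sum_append] at this
      simp at this
      omega
    · have hlt : u'.length < u.length := by omega
      have h1 : (u ++ s :: v).take (u'.length + 1) = u.take (u'.length + 1) := by
        rw [List.take_append]
        have : u'.length + 1 - u.length = 0 := by omega
        rw [this]; simp
      have h2 : (u' ++ s' :: v').take (u'.length + 1) = u' ++ [s'] := by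
        rw [List.take_append, List.take_of_length_le (by omega)]
        have : u'.length + 1 - u'.length = 1 := by omega
        rw [this]; simp
      have := hu (u'.length + 1)
      rw [← h1, heq, h2] at this
      rw [List.sum_append] at this
      simp at this
      omega
  obtain ⟨h1, h2⟩ := List.append_inj heq hlen
  obtain ⟨h3, h4⟩ := List.cons.injEq s v s' v' ▸ h2
  exact ⟨h1, h3, h4⟩

lemma split_exists {B : ℤ} : ∀ (t : List ℤ) (h : ℤ), B ≤ h → h + t.sum < B →
    ∃ u s v, t = u ++ s :: v ∧ (∀ k, B ≤ h + (u.take k).sum) ∧ h + u.sum + s < B := by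
  intro t
  induction t with
  | nil => intro h h1 h2; simp at h2; omega
  | cons x r ih =>
    intro h h1 h2
    rcases lt_or_ge (h + x) B with hx | hx
    · exact ⟨[], x, r, rfl, fun k => by simp [h1], by simpa using hx⟩
    · obtain ⟨u, s, v, rfl, hu, hs⟩ := ih (h + x) hx (by rw [List.sum_cons] at h2; omega)
      refine ⟨x :: u, s, v, rfl, fun k => ?_, by rw [List.sum_cons]; omega⟩
      cases k with
      | zero => simpa using h1
      | succ k =>
        rw [List.take_succ_cons, List.sum_cons]
        have := hu k
        omega

/-! ### more sum/take helpers -/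

lemma sum_take_cons_le {a : ℤ} {u v : List ℤ} {k : ℕ} (hk : k ≤ u.length) :
    ((a :: (u ++ v)).take (k+1)).sum = a + (u.take k).sum := by
  rw [List.take_succ_cons, List.sum_cons, take_app_le hk]

lemma sum_take_inner (a s : ℤ) (u v : List ℤ) (k : ℕ) :
    ((a :: (u ++ s :: v)).take (u.length + 2 + k)).sum = a + u.sum + s + (v.take k).sum := by
  have h1 : a :: (u ++ s :: v) = (a :: u) ++ (s :: v) := by simp
  have h2 : u.length + 2 + k = (a :: u).length + (1 + k) := by simp; omega
  rw [h1, h2, take_app_sum, Nat.add_comm 1 k, List.take_succ_cons]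
  simp [add_assoc]

lemma drop_inner (a s : ℤ) (u v : List ℤ) (k : ℕ) :
    (a :: (u ++ s :: v)).drop (u.length + 2 + k) = v.drop k := by
  have h1 : a :: (u ++ s :: v) = (a :: u) ++ (s :: v) := by simp
  have h2 : u.length + 2 + k = (a :: u).length + (1 + k) := by simp; omega
  rw [h1, h2, drop_app_sum, Nat.add_comm 1 k]
  rfl

lemma getD_eq_headI_drop : ∀ (l : List ℤ) (i : ℕ), i < l.length → l.getD i 0 = (l.drop i).headI := by
  intro l
  induction l with
  | nil => intro i h; simp at h
  | cons a t ih =>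
    intro i h
    cases i with
    | zero => simp
    | succ i => simpa using ih i (by simpa using h)

lemma NP_glue {u v : List ℤ} {s : ℤ} (hu : NP u) (hv : NP v) (hsum : 1 + u.sum + s = 0) :
    NP (1 :: (u ++ s :: v)) := by
  intro k
  cases k with
  | zero => simp
  | succ k =>
    rcases le_or_gt k u.length with hk | hk
    · rw [sum_take_cons_le hk]
      have := hu k; omega
    · have hk2 : k + 1 = u.length + 2 + (k - u.length - 1) := by omega
      rw [hk2, sum_take_inner]
      have := hv (k - u.length - 1); omega

/-- inner prefix sums of a glued word -/
lemma sum_take_glue_inner (u v : List ℤ) (s : ℤ) (k : ℕ) :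
    ((1 :: (u ++ s :: v)).take (u.length + 2 + k)).sum = 1 + u.sum + s + (v.take k).sum :=
  sum_take_inner 1 s u v k

/-- the count of words in a class, length 0 -/
lemma cnt_zero (P : List ℤ → Prop) [DecidablePred P] (hP : P []) : cnt P 0 = 1 := by
  unfold cnt MS WF
  rw [Finset.filter_singleton, if_pos hP]
  rfl

lemma head0_card (P : List ℤ → Prop) [DecidablePred P]
    (hPNP : ∀ w, P w → (∀ s ∈ w, s ≤ 1) ∧ NP w) (n : ℕ)
    (h0 : ∀ t, P (0 :: t) ↔ P t) :
    ((MS P (n+1)).filter (fun w => w.headI = 0)).card = cnt P n := by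
  rw [eq_comm]
  refine Finset.card_bij (fun t _ => (0:ℤ) :: t) ?_ ?_ ?_
  · intro t ht
    obtain ⟨h1, h2⟩ := (mem_MS hPNP).1 ht
    rw [Finset.mem_filter, mem_MS hPNP]
    exact ⟨⟨(h0 t).2 h1, by simp [h2]⟩, rfl⟩
  · intro a _ b _ h
    injection h
  · intro w hw
    rw [Finset.mem_filter, mem_MS hPNP] at hw
    obtain ⟨⟨h1, h2⟩, h3⟩ := hw
    rcases w with _ | ⟨a, t⟩
    · simp at h2
    · simp only [List.headI] at h3
      subst h3
      exact ⟨t, (mem_MS hPNP).2 ⟨(h0 t).1 h1, by simpa using h2⟩, rfl⟩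

lemma head1_card (P Q : List ℤ → Prop) [DecidablePred P] [DecidablePred Q] (n : ℕ)
    (hQNP : ∀ u, Q u → (∀ s ∈ u, s ≤ 1) ∧ NP u)
    (hPNP : ∀ w, P w → (∀ s ∈ w, s ≤ 1) ∧ NP w)
    (hrec : ∀ u v, Q u → P v → u.length + v.length + 2 = n + 1 →
      P (1 :: (u ++ (-(1 + u.sum)) :: v)))
    (hdec : ∀ w, P w → w.length = n+1 → w.headI = 1 →
      ∃ u v, Q u ∧ P v ∧ w = 1 :: (u ++ (-(1 + u.sum)) :: v)) :
    ((MS P (n+1)).filter (fun w => w.headI = 1)).card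
      = ∑ i ∈ Finset.range n, cnt Q i * cnt P (n-1-i) := by
  have hcard : ((Finset.range n).sigma (fun i => MS Q i ×ˢ MS P (n-1-i))).card
      = ∑ i ∈ Finset.range n, cnt Q i * cnt P (n-1-i) := by
    rw [Finset.card_sigma]
    exact Finset.sum_congr rfl (fun i _ => by rw [Finset.card_product]; rfl)
  rw [← hcard, eq_comm]
  refine Finset.card_bij (fun x _ => (1:ℤ) :: (x.2.1 ++ (-(1 + x.2.1.sum)) :: x.2.2)) ?_ ?_ ?_
  · rintro ⟨i, u, v⟩ hx
    rw [Finset.mem_sigma, Finset.mem_product] at hx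
    obtain ⟨hi, hu, hv⟩ := hx
    dsimp only at hi hu hv ⊢
    rw [Finset.mem_range] at hi
    obtain ⟨hu1, hu2⟩ := (mem_MS hQNP).1 hu
    obtain ⟨hv1, hv2⟩ := (mem_MS hPNP).1 hv
    have hlen : u.length + v.length + 2 = n + 1 := by omega
    rw [Finset.mem_filter, mem_MS hPNP]
    refine ⟨⟨hrec u v hu1 hv1 hlen, by simp; omega⟩, rfl⟩
  · rintro ⟨i, u, v⟩ hx ⟨i', u', v'⟩ hx' h
    rw [Finset.mem_sigma, Finset.mem_product] at hx hx'
    obtain ⟨hi, hu, hv⟩ := hx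
    obtain ⟨hi', hu', hv'⟩ := hx'
    dsimp only at hi hu hv hi' hu' hv' h
    obtain ⟨hu1, hu2⟩ := (mem_MS hQNP).1 hu
    obtain ⟨hu1', hu2'⟩ := (mem_MS hQNP).1 hu'
    simp only [List.cons.injEq, true_and] at h
    have := split_unique (B := 1) (h := 1) h
      (fun k => by have := (hQNP u hu1).2 k; omega)
      (fun k => by have := (hQNP u' hu1').2 k; omega)
      (by omega) (by omega)
    obtain ⟨e1, _, e3⟩ := this
    have : i = i' := by rw [← hu2, ← hu2', e1]
    subst this; subst e1; subst e3; rfl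
  · intro w hw
    rw [Finset.mem_filter, mem_MS hPNP] at hw
    obtain ⟨⟨h1, h2⟩, h3⟩ := hw
    obtain ⟨u, v, hQu, hPv, heq⟩ := hdec w h1 h2 h3
    have hulen : u.length < n ∧ v.length = n - 1 - u.length := by
      rw [heq] at h2
      simp at h2
      omega
    refine ⟨⟨u.length, u, v⟩, ?_, heq.symm⟩
    rw [Finset.mem_sigma, Finset.mem_product, Finset.mem_range]
    exact ⟨hulen.1, (mem_MS hQNP).2 ⟨hQu, rfl⟩,
      (mem_MS hPNP).2 ⟨hPv, hulen.2.symm ▸ rfl⟩⟩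

/-! ### class basic facts -/

lemma MzP_np : ∀ w, MzP w → (∀ s ∈ w, s ≤ 1) ∧ NP w := by
  rintro w ⟨⟨h1, h2⟩, _⟩
  exact ⟨fun s hs => by rcases h1 s hs with h|h|h <;> omega, h2⟩

lemma NmP_np : ∀ w, NmP w → (∀ s ∈ w, s ≤ 1) ∧ NP w := by
  rintro w ⟨h1, h2⟩
  exact ⟨fun s hs => by rcases h1 s hs with h|h|h <;> omega, h2⟩

lemma McP_np : ∀ w, McP w → (∀ s ∈ w, s ≤ 1) ∧ NP w := fun w h => ⟨h.1, h.2.1⟩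
lemma EcP_np : ∀ w, EcP w → (∀ s ∈ w, s ≤ 1) ∧ NP w := fun w h => McP_np w h.1
lemma DyP_np : ∀ w, DyP w → (∀ s ∈ w, s ≤ 1) ∧ NP w := by
  rintro w ⟨h1, h2, _⟩
  exact ⟨fun s hs => by rcases h1 s hs with h|h <;> omega, h2⟩
lemma AP_np (t : ℤ) : ∀ w, AP t w → (∀ s ∈ w, s ≤ 1) ∧ NP w := fun w h => DyP_np w h.1
lemma DclP_np : ∀ w, DclP w → (∀ s ∈ w, s ≤ 1) ∧ NP w := fun w h => AP_np 0 w h.1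

lemma NP_cons0 (t : List ℤ) : NP ((0:ℤ) :: t) ↔ NP t := by
  constructor
  · intro h k
    have := h (k+1)
    rwa [List.take_succ_cons, List.sum_cons, zero_add] at this
  · intro h k
    cases k with
    | zero => simp
    | succ k =>
      rw [List.take_succ_cons, List.sum_cons, zero_add]
      exact h k

lemma sum_glue (u v : List ℤ) (s : ℤ) : ((1:ℤ) :: (u ++ s :: v)).sum = 1 + u.sum + s + v.sum := by
  simp [List.sum_append]
  ring

lemma length_glue (u v : List ℤ) (s : ℤ) :
    ((1:ℤ) :: (u ++ s :: v)).length = u.length + v.length + 2 := by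
  simp
  omega

/-- generic: heads of nonempty class words are 0 or 1 -/
lemma head01 {P : List ℤ → Prop} [DecidablePred P]
    (hPNP : ∀ w, P w → (∀ s ∈ w, s ≤ 1) ∧ NP w) {n : ℕ} {w : List ℤ}
    (hw : w ∈ MS P (n+1)) : w.headI = 0 ∨ w.headI = 1 := by
  obtain ⟨h1, h2⟩ := (mem_MS hPNP).1 hw
  rcases w with _ | ⟨a, t⟩
  · simp at h2
  · obtain ⟨hs, hnp⟩ := hPNP _ h1
    have h3 := hnp 1
    simp only [List.take_succ_cons, List.take_zero, List.sum_cons, List.sum_nil, add_zero] at h3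
    have h4 := hs a (by simp)
    simp only [List.headI]
    omega

lemma cnt_succ_split (P : List ℤ → Prop) [DecidablePred P]
    (hPNP : ∀ w, P w → (∀ s ∈ w, s ≤ 1) ∧ NP w) (n : ℕ) :
    cnt P (n+1) = ((MS P (n+1)).filter (fun w => w.headI = 0)).card
      + ((MS P (n+1)).filter (fun w => w.headI = 1)).card := by
  rw [cnt, ← Finset.card_filter_add_card_filter_not (fun w => w.headI = 0)]
  congr 1
  have : (MS P (n+1)).filter (fun w => ¬ w.headI = 0)
      = (MS P (n+1)).filter (fun w => w.headI = 1) := by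
    apply Finset.filter_congr
    intro w hw
    rcases head01 hPNP hw with h | h <;> simp [h]
  rw [this]

/-! ### Motzkin excursion recurrence -/

lemma MzP_cons0 (t : List ℤ) : MzP ((0:ℤ) :: t) ↔ MzP t := by
  unfold MzP NmP
  rw [NP_cons0]
  constructor
  · rintro ⟨⟨h1, h2⟩, h3⟩
    exact ⟨⟨fun s hs => h1 s (by simp [hs]), h2⟩, by simpa using h3⟩
  · rintro ⟨⟨h1, h2⟩, h3⟩
    refine ⟨⟨fun s hs => ?_, h2⟩, by simpa using h3⟩
    rcases List.mem_cons.1 hs with rfl | hs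
    · right; left; rfl
    · exact h1 s hs

lemma Mz_rec (n : ℕ) : cnt MzP (n+1)
    = cnt MzP n + ∑ i ∈ Finset.range n, cnt MzP i * cnt MzP (n-1-i) := by
  rw [cnt_succ_split MzP MzP_np n]
  congr 1
  · exact head0_card MzP MzP_np n MzP_cons0
  · refine head1_card MzP MzP n MzP_np MzP_np ?_ ?_
    · -- recombination
      rintro u v hu hv _
      obtain ⟨⟨hu1, hu2⟩, hu3⟩ := hu
      obtain ⟨⟨hv1, hv2⟩, hv3⟩ := hv
      refine ⟨⟨?_, NP_glue hu2 hv2 (by ring)⟩, by rw [sum_glue]; omega⟩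
      intro x hx
      have hx' : x = 1 ∨ x ∈ u ∨ x = -(1 + u.sum) ∨ x ∈ v := by
        simpa [List.mem_append, or_assoc] using hx
      rcases hx' with rfl | hx' | rfl | hx'
      · left; rfl
      · exact hu1 x hx'
      · right; right; omega
      · exact hv1 x hx'
    · -- decomposition
      rintro w ⟨⟨hw1, hw2⟩, hw3⟩ hlen hhead
      rcases w with _ | ⟨a, t⟩
      · simp at hlen
      · simp only [List.headI] at hhead
        subst hhead
        have htsum : t.sum = -1 := by
          simp only [List.sum_cons] at hw3; omega
        obtain ⟨u, s, v, rfl, hu, hs⟩ := split_exists (B := 1) t 1 le_rfl (by omega)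
        have hNPu : NP u := fun k => by have := hu k; omega
        have husum : 0 ≤ u.sum := by
          have := hNPu u.length
          rwa [List.take_of_length_le le_rfl] at this
        have hsval : s = 1 ∨ s = 0 ∨ s = -1 := hw1 s (by simp)
        have hs1 : s = -1 := by omega
        have husum0 : u.sum = 0 := by omega
        subst hs1
        refine ⟨u, v, ⟨⟨fun x hx => hw1 x (by simp [hx]), hNPu⟩, husum0⟩,
          ⟨⟨fun x hx => hw1 x (by simp [hx]), ?_⟩, ?_⟩, ?_⟩
        · -- NP v
          intro k
          have := hw2 (u.length + 2 + k)
          rwa [sum_take_glue_inner, husum0, show (1:ℤ) + 0 + -1 = 0 by ring, zero_add] at this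
        · -- v.sum = 0
          have := sum_glue u v (-1)
          rw [show ((1:ℤ) :: (u ++ (-1) :: v)).sum = 0 from hw3] at this
          omega
        · rw [husum0]
          norm_num

/-! ### Motzkin meander recurrence (last return decomposition) -/

lemma NmP_append_left {v : List ℤ} {x : List ℤ} (h : NmP (v ++ x)) : NmP v := by
  obtain ⟨h1, h2⟩ := h
  refine ⟨fun s hs => h1 s (by simp [hs]), fun k => ?_⟩
  rcases le_or_gt k v.length with hk | hk
  · have := h2 k
    rwa [take_app_le hk] at this
  · rw [List.take_of_length_le hk.le]
    have := h2 v.length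
    rwa [take_app_le le_rfl, List.take_of_length_le le_rfl] at this

lemma NmP_sum_nonneg {v : List ℤ} (h : NmP v) : 0 ≤ v.sum := by
  have := h.2 v.length
  rwa [List.take_of_length_le le_rfl] at this

lemma last_return : ∀ w, NmP w → 1 ≤ w.sum → ∃ c u, w = c ++ (1:ℤ) :: u ∧ MzP c ∧ NmP u := by
  intro w
  induction w using List.reverseRecOn with
  | nil => intro _ h; simp at h
  | append_singleton v x ih =>
    intro hnm hsum
    have hv : NmP v := NmP_append_left hnm
    have hvsum : 0 ≤ v.sum := NmP_sum_nonneg hv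
    have hx : x = 1 ∨ x = 0 ∨ x = -1 := hnm.1 x (by simp)
    have hwsum : (v ++ [x]).sum = v.sum + x := by simp
    rcases eq_or_lt_of_le hvsum with h0 | h1
    · -- v.sum = 0, x = 1
      have hx1 : x = 1 := by omega
      subst hx1
      exact ⟨v, [], rfl, ⟨hv, h0.symm⟩, ⟨by simp, fun k => by simp⟩⟩
    · obtain ⟨c, u, hveq, hc, hu⟩ := ih hv h1
      refine ⟨c, u ++ [x], by rw [hveq]; simp, hc, ?_⟩
      obtain ⟨hu1, hu2⟩ := hu
      refine ⟨fun s hs => ?_, fun k => ?_⟩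
      · rcases List.mem_append.1 hs with hs | hs
        · exact hu1 s hs
        · simp at hs; subst hs; exact hx
      · rcases le_or_gt k u.length with hk | hk
        · rw [take_app_le hk]
          exact hu2 k
        · rw [List.take_of_length_le (by simpa using hk)]
          have hcsum : c.sum = 0 := hc.2
          have : v.sum = c.sum + 1 + u.sum := by rw [hveq]; simp; ring
          simp only [List.sum_append, List.sum_cons, List.sum_nil, add_zero]
          omega

lemma sum_take_last_ret (c u : List ℤ) (m : ℕ) :
    ((c ++ (1:ℤ) :: u).take (c.length + (1+m))).sum = c.sum + 1 + (u.take m).sum := by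
  rw [take_app_sum, show 1+m = m+1 by omega, List.take_succ_cons, List.sum_cons]
  ring

lemma last_return_unique {c u c' u' : List ℤ} (h : c ++ (1:ℤ) :: u = c' ++ 1 :: u')
    (hc : c.sum = 0) (hc' : c'.sum = 0) (hu : NP u) (hu' : NP u') :
    c = c' ∧ u = u' := by
  have hlen : c.length = c'.length := by
    by_contra hne
    rcases Nat.lt_or_ge c.length c'.length with hlt | hge
    · have e1 : ((c' ++ (1:ℤ) :: u').take c'.length).sum = 0 := by
        rw [take_app_le le_rfl, List.take_of_length_le le_rfl]; exact hc'
      have e3 : ((c ++ (1:ℤ) :: u).take c'.length).sum = 0 := by rw [h]; exact e1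
      have hm : c'.length = c.length + (1 + (c'.length - c.length - 1)) := by omega
      rw [hm, sum_take_last_ret] at e3
      have := hu (c'.length - c.length - 1)
      omega
    · have hlt : c'.length < c.length := by omega
      have e1 : ((c ++ (1:ℤ) :: u).take c.length).sum = 0 := by
        rw [take_app_le le_rfl, List.take_of_length_le le_rfl]; exact hc
      have e3 : ((c' ++ (1:ℤ) :: u').take c.length).sum = 0 := by rw [← h]; exact e1
      have hm : c.length = c'.length + (1 + (c.length - c'.length - 1)) := by omega
      rw [hm, sum_take_last_ret] at e3
      have := hu' (c.length - c'.length - 1)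
      omega
  obtain ⟨e1, e2⟩ := List.append_inj h hlen
  exact ⟨e1, by injection e2⟩

lemma Nm_rec (n : ℕ) : cnt NmP n
    = cnt MzP n + ∑ i ∈ Finset.range n, cnt MzP i * cnt NmP (n-1-i) := by
  have hsplit := Finset.card_filter_add_card_filter_not
    (s := MS NmP n) (fun w => w.sum = 0)
  rw [cnt, ← hsplit]
  congr 1
  · -- zero-sum part = Motzkin excursions
    congr 1
    ext w
    rw [Finset.mem_filter, mem_MS NmP_np, mem_MS MzP_np]
    unfold MzP
    tauto
  · -- positive-sum part
    have hcard : ((Finset.range n).sigma (fun i => MS MzP i ×ˢ MS NmP (n-1-i))).card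
        = ∑ i ∈ Finset.range n, cnt MzP i * cnt NmP (n-1-i) := by
      rw [Finset.card_sigma]
      exact Finset.sum_congr rfl (fun i _ => by rw [Finset.card_product]; rfl)
    rw [← hcard, eq_comm]
    refine Finset.card_bij (fun x _ => x.2.1 ++ (1:ℤ) :: x.2.2) ?_ ?_ ?_
    · rintro ⟨i, c, u⟩ hx
      rw [Finset.mem_sigma, Finset.mem_product] at hx
      obtain ⟨hi, hcm, hum⟩ := hx
      dsimp only at hi hcm hum ⊢
      rw [Finset.mem_range] at hi
      obtain ⟨hc, hclen⟩ := (mem_MS MzP_np).1 hcm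
      obtain ⟨hu, hulen⟩ := (mem_MS NmP_np).1 hum
      have husum : 0 ≤ u.sum := NmP_sum_nonneg hu
      rw [Finset.mem_filter, mem_MS NmP_np]
      refine ⟨⟨⟨fun s hs => ?_, fun k => ?_⟩, by simp; omega⟩, by simp [hc.2]; omega⟩
      · rcases List.mem_append.1 hs with hs | hs
        · exact hc.1.1 s hs
        · rcases List.mem_cons.1 hs with rfl | hs
          · left; rfl
          · exact hu.1 s hs
      · rcases le_or_gt k c.length with hk | hk
        · rw [take_app_le hk]; exact hc.1.2 k
        · have hk2 : k = c.length + ((k - c.length - 1) + 1) := by omega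
          rw [hk2, take_app_sum, List.take_succ_cons, List.sum_cons, hc.2]
          have := hu.2 (k - c.length - 1)
          omega
    · rintro ⟨i, c, u⟩ hx ⟨i', c', u'⟩ hx' h
      rw [Finset.mem_sigma, Finset.mem_product] at hx hx'
      obtain ⟨hi, hcm, hum⟩ := hx
      obtain ⟨hi', hcm', hum'⟩ := hx'
      dsimp only at hi hcm hum hi' hcm' hum' h
      obtain ⟨hc, hclen⟩ := (mem_MS MzP_np).1 hcm
      obtain ⟨hu, hulen⟩ := (mem_MS NmP_np).1 hum
      obtain ⟨hc', hclen'⟩ := (mem_MS MzP_np).1 hcm'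
      obtain ⟨hu', hulen'⟩ := (mem_MS NmP_np).1 hum'
      obtain ⟨e1, e2⟩ := last_return_unique h hc.2 hc'.2 hu.2 hu'.2
      have : i = i' := by rw [← hclen, ← hclen', e1]
      subst this; subst e1; subst e2; rfl
    · intro w hw
      rw [Finset.mem_filter, mem_MS NmP_np] at hw
      obtain ⟨⟨hw1, hw2⟩, hw3⟩ := hw
      have hws : 1 ≤ w.sum := by
        have := NmP_sum_nonneg hw1
        omega
      obtain ⟨c, u, rfl, hc, hu⟩ := last_return w hw1 hws
      have hlen : c.length + 1 + u.length = n := by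
        have h := hw2
        simp only [List.length_append, List.length_cons] at h
        omega
      refine ⟨⟨c.length, c, u⟩, ?_, rfl⟩
      rw [Finset.mem_sigma, Finset.mem_product, Finset.mem_range]
      dsimp only
      refine ⟨by omega, (mem_MS MzP_np).2 ⟨hc, rfl⟩, (mem_MS NmP_np).2 ⟨hu, by omega⟩⟩

/-! ### catastrophe excursion recurrence -/

lemma take_app_succ (p : List ℤ) (x : ℤ) (q : List ℤ) :
    (p ++ x :: q).take (p.length+1) = p ++ [x] := by
  rw [List.take_append, List.take_of_length_le (by omega)]
  have : p.length + 1 - p.length = 1 := by omega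
  rw [this]
  simp

lemma getD_mem (l : List ℤ) (n : ℕ) (h : n < l.length) : l.getD n 0 ∈ l := by
  rw [List.getD_eq_getElem _ _ h]; exact List.getElem_mem h

lemma glue_getD_left {u : List ℤ} (s : ℤ) (v : List ℤ) {j : ℕ} (hj : j < u.length) :
    ((1:ℤ) :: (u ++ s :: v)).getD (j+1) 0 = u.getD j 0 := by
  rw [List.getD_cons_succ, List.getD_append _ _ _ _ hj]

lemma glue_getD_mid (u : List ℤ) (s : ℤ) (v : List ℤ) :
    ((1:ℤ) :: (u ++ s :: v)).getD (u.length+1) 0 = s := by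
  rw [List.getD_cons_succ, List.getD_append_right _ _ _ _ le_rfl]
  simp

lemma glue_getD_right (u : List ℤ) (s : ℤ) (v : List ℤ) (k : ℕ) :
    ((1:ℤ) :: (u ++ s :: v)).getD (u.length+2+k) 0 = v.getD k 0 := by
  have h1 : u.length+2+k = (u.length+1+k)+1 := by omega
  rw [h1, List.getD_cons_succ, List.getD_append_right _ _ _ _ (by omega)]
  have h2 : u.length+1+k - u.length = k+1 := by omega
  rw [h2, List.getD_cons_succ]

lemma McP_cons0 (t : List ℤ) : McP ((0:ℤ) :: t) ↔ McP t := by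
  unfold McP
  rw [NP_cons0]
  constructor
  · rintro ⟨h1, h2, h3⟩
    refine ⟨fun s hs => h1 s (by simp [hs]), h2, fun i hi hg => ?_⟩
    have := h3 (i+1) (by simpa using hi) (by rwa [List.getD_cons_succ])
    rwa [List.take_succ_cons, List.sum_cons, zero_add] at this
  · rintro ⟨h1, h2, h3⟩
    refine ⟨fun s hs => ?_, h2, fun i hi hg => ?_⟩
    · rcases List.mem_cons.1 hs with rfl | hs
      · norm_num
      · exact h1 s hs
    · cases i with
      | zero => simp at hg
      | succ i =>
        rw [List.getD_cons_succ] at hg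
        have := h3 i (by simpa using hi) hg
        rw [List.take_succ_cons, List.sum_cons, zero_add]
        exact this

lemma EcP_cons0 (t : List ℤ) : EcP ((0:ℤ) :: t) ↔ EcP t := by
  unfold EcP
  rw [McP_cons0]
  simp

lemma Ec_rec (n : ℕ) : cnt EcP (n+1)
    = cnt EcP n + ∑ i ∈ Finset.range n, cnt NmP i * cnt EcP (n-1-i) := by
  rw [cnt_succ_split EcP EcP_np n]
  congr 1
  · exact head0_card EcP EcP_np n EcP_cons0
  · refine head1_card EcP NmP n NmP_np EcP_np ?_ ?_
    · -- recombination
      rintro u v hu hv hlen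
      obtain ⟨hu1, hu2⟩ := hu
      obtain ⟨⟨hv1, hv2, hv3⟩, hv4⟩ := hv
      have husum : 0 ≤ u.sum := NmP_sum_nonneg ⟨hu1, hu2⟩
      set s : ℤ := -(1 + u.sum) with hs
      refine ⟨⟨?_, NP_glue hu2 hv2 (by rw [hs]; ring), ?_⟩, by rw [sum_glue]; omega⟩
      · intro x hx
        have hx' : x = 1 ∨ x ∈ u ∨ x = s ∨ x ∈ v := by
          simpa [List.mem_append, or_assoc] using hx
        rcases hx' with rfl | hx' | rfl | hx'
        · norm_num
        · rcases hu1 x hx' with h|h|h <;> omega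
        · omega
        · exact hv1 x hx'
      · intro i hi hg
        have hwlen : ((1:ℤ) :: (u ++ s :: v)).length = u.length + v.length + 2 :=
          length_glue u v s
        rcases Nat.lt_or_ge i 1 with h1 | h1
        · exfalso
          have hi0 : i = 0 := by omega
          subst hi0
          simp only [List.getD_cons_zero] at hg
          omega
        rcases Nat.lt_or_ge i (u.length+1) with h2 | h2
        · -- inside u : impossible
          exfalso
          have hj : i - 1 < u.length := by omega
          have hgd := glue_getD_left (u := u) s v hj
          rw [show i = (i-1)+1 by omega] at hg
          rw [hgd] at hg
          have := hu1 _ (getD_mem u (i-1) hj)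
          omega
        rcases Nat.lt_or_ge i (u.length+2) with h3 | h3
        · -- the closing step
          have hieq : i = u.length + 1 := by omega
          subst hieq
          have : ((1:ℤ) :: (u ++ s :: v)).take (u.length+2) = 1 :: (u ++ [s]) := by
            rw [show u.length + 2 = (u.length+1)+1 by omega, List.take_succ_cons,
              take_app_succ]
          rw [show u.length+1+1 = u.length+2 by omega, this]
          simp [List.sum_append, hs]
        · -- inside v
          have hk : i - u.length - 2 < v.length := by rw [hwlen] at hi; omega
          have hieq : i = u.length + 2 + (i - u.length - 2) := by omega
          have hgv : v.getD (i - u.length - 2) 0 ≤ -2 := by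
            rw [hieq, glue_getD_right] at hg
            exact hg
          have := hv3 _ hk hgv
          rw [show i + 1 = u.length + 2 + (i - u.length - 2 + 1) by omega,
            sum_take_glue_inner, this, hs]
          ring
    · -- decomposition
      rintro w hw hlen hhead
      obtain ⟨⟨hw1, hw2, hw3⟩, hw4⟩ := hw
      rcases w with _ | ⟨a, t⟩
      · simp at hlen
      · simp only [List.headI] at hhead
        subst hhead
        have htsum : t.sum = -1 := by
          simp only [List.sum_cons] at hw4; omega
        obtain ⟨u, s, v, rfl, hu, hs⟩ := split_exists (B := 1) t 1 le_rfl (by omega)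
        have hNPu : NP u := fun k => by have := hu k; omega
        have husum : 0 ≤ u.sum := by
          have := hNPu u.length
          rwa [List.take_of_length_le le_rfl] at this
        have hwlen : ((1:ℤ) :: (u ++ s :: v)).length = u.length + v.length + 2 :=
          length_glue u v s
        -- value of the closing step
        have heq0 : 1 + u.sum + s = 0 := by
          have hsle : s ≤ 1 := hw1 s (by simp)
          rcases (by omega : s ≤ -2 ∨ s = -1 ∨ 0 ≤ s) with hc | hc | hc
          · have hg : ((1:ℤ) :: (u ++ s :: v)).getD (u.length+1) 0 ≤ -2 := by
              rwa [glue_getD_mid]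
            have := hw3 (u.length+1) (by omega) hg
            rw [show u.length+1+1 = u.length+2+0 by omega, sum_take_glue_inner] at this
            simpa using this
          · omega
          · omega
        -- steps of u are Motzkin steps
        have hust : ∀ x ∈ u, x = 1 ∨ x = 0 ∨ x = -1 := by
          intro x hx
          have hxle : x ≤ 1 := hw1 x (by simp [hx])
          rcases (by omega : -1 ≤ x ∨ x ≤ -2) with h | h
          · omega
          · exfalso
            obtain ⟨p, q, rfl⟩ := List.append_of_mem hx
            have hg : ((1:ℤ) :: ((p ++ x :: q) ++ s :: v)).getD (p.length+1) 0 ≤ -2 := by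
              have hj : p.length < (p ++ x :: q).length := by simp
              rw [glue_getD_left s v hj, List.getD_append_right _ _ _ _ le_rfl]
              simpa using h
            have hplen : p.length + 1 < ((1:ℤ) :: ((p ++ x :: q) ++ s :: v)).length := by
              simp
            have hz := hw3 (p.length+1) hplen hg
            have := hu (p.length+1)
            rw [show (p ++ x :: q) ++ s :: v = p ++ (x :: (q ++ s :: v)) by simp] at hz
            rw [show p.length+1+1 = ((1:ℤ)::p).length + 1 by simp,
              show ((1:ℤ) :: (p ++ x :: (q ++ s :: v))) = ((1:ℤ)::p) ++ x :: (q ++ s :: v) by simp,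
              take_app_succ] at hz
            rw [take_app_succ p x q] at this
            simp [List.sum_append] at hz this
            omega
        refine ⟨u, v, ⟨hust, hNPu⟩, ⟨⟨fun x hx => hw1 x (by simp [hx]), ?_, ?_⟩, ?_⟩, ?_⟩
        · -- NP v
          intro k
          have := hw2 (u.length + 2 + k)
          rwa [sum_take_glue_inner, heq0, zero_add] at this
        · -- cat condition for v
          intro i hi hg
          have hg' : ((1:ℤ) :: (u ++ s :: v)).getD (u.length+2+i) 0 ≤ -2 := by
            rwa [glue_getD_right]
          have := hw3 (u.length+2+i) (by omega) hg'
          rwa [show u.length+2+i+1 = u.length+2+(i+1) by omega,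
            sum_take_glue_inner, heq0, zero_add] at this
        · -- v.sum = 0
          have := sum_glue u v s
          rw [show ((1:ℤ) :: (u ++ s :: v)).sum = 0 from hw4] at this
          omega
        · -- the shape
          have : s = -(1 + u.sum) := by omega
          rw [this]

/-! ### meander-with-cat ↔ excursion-with-cat of length n+1 -/

def clo (w : List ℤ) : ℤ := if w.sum = 0 then 0 else -w.sum

lemma McP_sum_nonneg {w : List ℤ} (h : McP w) : 0 ≤ w.sum := by
  have := h.2.1 w.length
  rwa [List.take_of_length_le le_rfl] at this

lemma Mc_Ec (n : ℕ) : cnt McP n = cnt EcP (n+1) := by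
  refine Finset.card_bij (fun w _ => w ++ [clo w]) ?_ ?_ ?_
  · intro w hw
    obtain ⟨⟨h1, h2, h3⟩, hlen⟩ := (mem_MS McP_np).1 hw
    have hsum : 0 ≤ w.sum := McP_sum_nonneg ⟨h1, h2, h3⟩
    have hclo : w.sum + clo w = 0 := by
      unfold clo; split <;> omega
    have hclole : clo w ≤ 0 := by unfold clo; split <;> omega
    rw [mem_MS EcP_np]
    refine ⟨⟨⟨fun s hs => ?_, fun k => ?_, fun i hi hg => ?_⟩, by simp; omega⟩, by simp [hlen]⟩
    · rcases List.mem_append.1 hs with hs | hs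
      · exact h1 s hs
      · simp at hs; omega
    · rcases le_or_gt k w.length with hk | hk
      · rw [take_app_le hk]; exact h2 k
      · rw [List.take_of_length_le (by simp; omega)]
        simp [List.sum_append]
        omega
    · rcases Nat.lt_or_ge i w.length with hiw | hiw
      · rw [List.getD_append _ _ _ _ hiw] at hg
        have := h3 i hiw hg
        rwa [take_app_le (by omega)]
      · have hieq : i = w.length := by
          simp only [List.length_append, List.length_singleton] at hi; omega
        subst hieq
        rw [List.take_of_length_le (by simp)]
        simp [List.sum_append]
        omega
  · intro a ha b hb h
    have la : a.length = n := ((mem_MS McP_np).1 ha).2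
    have lb : b.length = n := ((mem_MS McP_np).1 hb).2
    exact (List.append_inj h (by omega)).1
  · intro e he
    obtain ⟨⟨⟨h1, h2, h3⟩, h4⟩, hlen⟩ := (mem_MS EcP_np).1 he
    have hne : e ≠ [] := by intro h; rw [h] at hlen; simp at hlen
    have hsplit : e.dropLast ++ [e.getLast hne] = e := List.dropLast_append_getLast hne
    set w := e.dropLast with hwdef
    set x := e.getLast hne with hxdef
    have hwlen : w.length = n := by
      have := List.length_dropLast (xs := e)
      rw [hwdef, this, hlen]
      omega
    have hwsum : w.sum + x = 0 := by
      have : (w ++ [x]).sum = 0 := by rw [hsplit]; exact h4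
      simpa [List.sum_append] using this
    have hwMc : McP w := by
      refine ⟨fun s hs => h1 s (by rw [← hsplit]; simp [hs]), fun k => ?_, fun i hi hg => ?_⟩
      · rcases le_or_gt k w.length with hk | hk
        · have := h2 k
          rw [← hsplit, take_app_le hk] at this
          exact this
        · rw [List.take_of_length_le hk.le]
          have := h2 w.length
          rw [← hsplit, take_app_le le_rfl, List.take_of_length_le le_rfl] at this
          exact this
      · have hg' : e.getD i 0 ≤ -2 := by
          rw [← hsplit, List.getD_append _ _ _ _ hi]
          exact hg
        have := h3 i (by rw [← hsplit]; simp; omega) hg'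
        rw [← hsplit, take_app_le (by omega)] at this
        exact this
    refine ⟨w, (mem_MS McP_np).2 ⟨hwMc, hwlen⟩, ?_⟩
    have hclo : clo w = x := by
      unfold clo
      split_ifs with h
      · omega
      · omega
    show w ++ [clo w] = e
    rw [hclo, hsplit]

/-! ### Dyck side basics -/

lemma steps_parity : ∀ w : List ℤ, (∀ s ∈ w, s = 1 ∨ s = -1) → (2:ℤ) ∣ (w.sum + w.length) := by
  intro w
  induction w with
  | nil => simp
  | cons a t ih =>
    intro h
    have ha := h a (by simp)
    have := ih (fun s hs => h s (by simp [hs]))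
    simp only [List.sum_cons, List.length_cons]
    push_cast
    rcases ha with rfl | rfl <;> omega

lemma DyP_even {w : List ℤ} (h : DyP w) : 2 ∣ w.length := by
  have := steps_parity w h.1
  rw [h.2.2, zero_add] at this
  exact_mod_cast this

lemma AP_nil (t : ℤ) : AP t [] := by
  refine ⟨⟨by simp, fun k => by simp, by simp⟩, fun i hp => ?_⟩
  exfalso
  have := hp.length_le
  simp at this

lemma DclP_nil : DclP [] := by
  refine ⟨AP_nil 0, fun hp => ?_⟩
  have := hp.length_le
  simp at this

lemma cnt_odd_zero (P : List ℤ → Prop) [DecidablePred P]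
    (hP : ∀ w, P w → (∀ s ∈ w, s ≤ 1) ∧ NP w)
    (hD : ∀ w, P w → DyP w) (k : ℕ) : cnt P (2*k+1) = 0 := by
  rw [cnt, Finset.card_eq_zero]
  apply Finset.eq_empty_of_forall_notMem
  intro w hw
  obtain ⟨h1, h2⟩ := (mem_MS hP).1 hw
  have := DyP_even (hD w h1)
  omega

lemma dyck_head1 {P : List ℤ → Prop} [DecidablePred P]
    (hP : ∀ w, P w → (∀ s ∈ w, s ≤ 1) ∧ NP w)
    (hD : ∀ w, P w → DyP w) {n : ℕ} {w : List ℤ}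
    (hw : w ∈ MS P (n+1)) : w.headI = 1 := by
  obtain ⟨h1, h2⟩ := (mem_MS hP).1 hw
  rcases w with _ | ⟨a, t⟩
  · simp at h2
  · have hst := (hD _ h1).1 a (by simp)
    have hnp := (hD _ h1).2.1 1
    simp only [List.take_succ_cons, List.take_zero, List.sum_cons, List.sum_nil, add_zero] at hnp
    simp only [List.headI]
    omega

/-! ### occurrence transport -/

lemma occ_glue_zero {u v : List ℤ} :
    (([1,1,1]:List ℤ) <+: (1 :: (u ++ (-1:ℤ) :: v))) ↔ (([1,1]:List ℤ) <+: u) := by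
  constructor
  · rintro ⟨r, hr⟩
    rcases u with _ | ⟨a, u⟩
    · simp at hr
    · rcases u with _ | ⟨b, u⟩
      · simp at hr
      · simp at hr
        obtain ⟨h1, h2, -⟩ := hr
        exact ⟨u, by rw [← h1, ← h2]; rfl⟩
  · rintro ⟨r, rfl⟩
    exact ⟨r ++ (-1) :: v, by simp⟩

lemma occ_glue_left {u v : List ℤ} {j : ℕ} (hj : j ≤ u.length) :
    (([1,1,1]:List ℤ) <+: (u ++ (-1:ℤ) :: v).drop j) ↔ (([1,1,1]:List ℤ) <+: u.drop j) := by
  rw [List.drop_append, show j - u.length = 0 by omega, List.drop_zero]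
  generalize u.drop j = d
  constructor
  · rintro ⟨r, hr⟩
    rcases d with _ | ⟨a, d⟩
    · simp at hr
    · rcases d with _ | ⟨b, d⟩
      · simp at hr
      · rcases d with _ | ⟨c, d⟩
        · simp at hr
        · simp at hr
          obtain ⟨h1, h2, h3, -⟩ := hr
          exact ⟨d, by rw [← h1, ← h2, ← h3]; rfl⟩
  · intro h
    exact h.trans (List.prefix_append d _)

lemma AvB_glue {t : ℤ} {u v : List ℤ} (husum : u.sum = 0) :
    AvB t (1 :: (u ++ (-1:ℤ) :: v)) ↔
      ((([1,1]:List ℤ) <+: u) → 0 < t) ∧ AvB (t-1) u ∧ AvB t v := by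
  constructor
  · intro H
    refine ⟨fun hp => ?_, fun j hocc => ?_, fun k hocc => ?_⟩
    · have := H 0 (by rw [List.drop_zero]; exact occ_glue_zero.2 hp)
      simpa using this
    · have hj3 : j + 3 ≤ u.length := by
        have := hocc.length_le
        simp only [List.length_drop] at this
        simp at this
        omega
      have := H (j+1) (by rw [List.drop_succ_cons]; exact (occ_glue_left (by omega)).2 hocc)
      rw [sum_take_cons_le (by omega)] at this
      omega
    · have := H (u.length+2+k) (by rw [show u.length+2+k = (u.length+1+k)+1 by omega,
        List.drop_succ_cons, show u.length+1+k = u.length + (1+k) by omega, drop_app_sum,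
        show 1+k = k+1 by omega, List.drop_succ_cons]; exact hocc)
      rwa [sum_take_glue_inner, husum, show (1:ℤ) + 0 + -1 = 0 by ring, zero_add] at this
  · rintro ⟨h0, hu, hv⟩ i hocc
    cases i with
    | zero =>
      rw [List.drop_zero] at hocc
      have := h0 (occ_glue_zero.1 hocc)
      simpa using this
    | succ j =>
      rw [List.drop_succ_cons] at hocc
      rcases le_or_gt j u.length with hj | hj
      · rw [occ_glue_left hj] at hocc
        have := hu j hocc
        rw [sum_take_cons_le hj]
        omega
      · have hk : j = u.length + (1 + (j - u.length - 1)) := by omega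
        rw [hk, drop_app_sum, show 1 + (j - u.length - 1) = (j - u.length - 1) + 1 by omega,
          List.drop_succ_cons] at hocc
        have := hv _ hocc
        rw [show j + 1 = u.length + 2 + (j - u.length - 1) by omega,
          sum_take_glue_inner, husum, show (1:ℤ) + 0 + -1 = 0 by ring, zero_add]
        exact this

lemma AvB_nonpos {a b : ℤ} {u : List ℤ} (hNP : NP u) (ha : a ≤ 0) (hb : b ≤ 0) :
    AvB a u ↔ AvB b u := by
  have key : ∀ c : ℤ, c ≤ 0 → (AvB c u ↔ ∀ i, ¬ (([1,1,1]:List ℤ) <+: u.drop i)) := by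
    intro c hc
    constructor
    · intro h i hocc
      have := h i hocc
      have := hNP i
      omega
    · intro h i hocc
      exact absurd hocc (h i)
  rw [key a ha, key b hb]

/-! ### Dyck recurrences -/

lemma AP_rec_gen (t : ℤ) (Q : List ℤ → Prop) [DecidablePred Q]
    (hQD : ∀ u, Q u → DyP u)
    (hQiff : ∀ u, DyP u → (Q u ↔ (AvB (t-1) u ∧ ((([1,1]:List ℤ) <+: u) → 0 < t))))
    (n : ℕ) :
    cnt (AP t) (n+1) = ∑ i ∈ Finset.range n, cnt Q i * cnt (AP t) (n-1-i) := by
  have hQNP : ∀ u, Q u → (∀ s ∈ u, s ≤ 1) ∧ NP u := fun u hu => DyP_np u (hQD u hu)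
  have hstep : cnt (AP t) (n+1) = ((MS (AP t) (n+1)).filter (fun w => w.headI = 1)).card := by
    rw [cnt, Finset.filter_true_of_mem]
    intro w hw
    exact dyck_head1 (AP_np t) (fun w h => h.1) hw
  rw [hstep]
  refine head1_card (AP t) Q n hQNP (AP_np t) ?_ ?_
  · -- recombination
    rintro u v hQu hAPv _
    have hDu := hQD u hQu
    have husum : u.sum = 0 := hDu.2.2
    have hs : -(1 + u.sum) = (-1 : ℤ) := by rw [husum]; ring
    rw [hs]
    obtain ⟨hDv, hAv⟩ := hAPv
    have hvs : v.sum = 0 := hDv.2.2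
    constructor
    · refine ⟨?_, NP_glue hDu.2.1 hDv.2.1 (by omega), by rw [sum_glue]; omega⟩
      intro x hx
      have hx' : x = 1 ∨ x ∈ u ∨ x = -1 ∨ x ∈ v := by
        simpa [List.mem_append, or_assoc] using hx
      rcases hx' with rfl | hx' | rfl | hx'
      · left; rfl
      · exact hDu.1 x hx'
      · right; rfl
      · exact hDv.1 x hx'
    · rw [AvB_glue husum]
      obtain ⟨hA, h0⟩ := ((hQiff u hDu).1 hQu)
      exact ⟨h0, hA, hAv⟩
  · -- decomposition
    rintro w hAP hlen hhead
    obtain ⟨⟨hw1, hw2, hw3⟩, hAv⟩ := hAP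
    rcases w with _ | ⟨a, w'⟩
    · simp at hlen
    · simp only [List.headI] at hhead
      subst hhead
      have htsum : w'.sum = -1 := by
        simp only [List.sum_cons] at hw3; omega
      obtain ⟨u, s, v, rfl, hu, hs⟩ := split_exists (B := 1) w' 1 le_rfl (by omega)
      have hNPu : NP u := fun k => by have := hu k; omega
      have husum : 0 ≤ u.sum := by
        have := hNPu u.length
        rwa [List.take_of_length_le le_rfl] at this
      have hsval : s = 1 ∨ s = -1 := hw1 s (by simp)
      have hs1 : s = -1 := by omega
      have husum0 : u.sum = 0 := by omega
      subst hs1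
      have hDu : DyP u := ⟨fun x hx => hw1 x (by simp [hx]), hNPu, husum0⟩
      have hNPv : NP v := by
        intro k
        have := hw2 (u.length + 2 + k)
        rwa [sum_take_glue_inner, husum0, show (1:ℤ) + 0 + -1 = 0 by ring, zero_add] at this
      have hvsum : v.sum = 0 := by
        have := sum_glue u v (-1)
        rw [show ((1:ℤ) :: (u ++ (-1) :: v)).sum = 0 from hw3] at this
        omega
      have hDv : DyP v := ⟨fun x hx => hw1 x (by simp [hx]), hNPv, hvsum⟩
      rw [AvB_glue husum0] at hAv
      obtain ⟨h0, hA, hAvv⟩ := hAv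
      refine ⟨u, v, (hQiff u hDu).2 ⟨hA, h0⟩, ⟨hDv, hAvv⟩, ?_⟩
      rw [husum0]
      norm_num

lemma take2_sum (v : List ℤ) (k : ℕ) :
    (((1:ℤ) :: (-1:ℤ) :: v).take (k+2)).sum = (v.take k).sum := by
  rw [show k+2 = (k+1)+1 by omega, List.take_succ_cons, List.take_succ_cons]
  simp

lemma Dcl_step (m : ℕ) : cnt DclP (m+2) = cnt (AP 0) m := by
  rw [eq_comm]
  refine Finset.card_bij (fun v _ => (1:ℤ) :: (-1:ℤ) :: v) ?_ ?_ ?_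
  · intro v hv
    obtain ⟨⟨⟨hv1, hv2, hv3⟩, hAv⟩, hvlen⟩ := (mem_MS (AP_np 0)).1 hv
    rw [mem_MS DclP_np]
    refine ⟨⟨⟨⟨?_, ?_, by simp [hv3]⟩, ?_⟩, ?_⟩, by simp [hvlen]⟩
    · intro x hx
      rcases List.mem_cons.1 hx with rfl | hx
      · left; rfl
      rcases List.mem_cons.1 hx with rfl | hx
      · right; rfl
      · exact hv1 x hx
    · intro k
      rcases k with _ | k
      · simp
      rcases k with _ | k
      · simp
      · rw [show k+1+1 = k+2 by omega, take2_sum]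
        exact hv2 k
    · intro i hocc
      rcases i with _ | i
      · exfalso
        rw [List.drop_zero] at hocc
        obtain ⟨r, hr⟩ := hocc
        simp at hr
      rcases i with _ | i
      · exfalso
        rw [List.drop_succ_cons, List.drop_zero] at hocc
        obtain ⟨r, hr⟩ := hocc
        simp at hr
      · rw [show i+1+1 = i+2 by omega] at hocc ⊢
        rw [show ((1:ℤ) :: (-1:ℤ) :: v).drop (i+2) = v.drop i from rfl] at hocc
        rw [take2_sum]
        exact hAv i hocc
    · rintro ⟨r, hr⟩
      simp at hr
  · intro a _ b _ h
    simp only [List.cons.injEq, true_and] at h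
    exact h
  · intro w hw
    obtain ⟨⟨⟨hD, hAv⟩, hUU⟩, hwlen⟩ := (mem_MS DclP_np).1 hw
    have hhead : w.headI = 1 := by
      have : w ∈ MS DclP (m+1+1) := by rwa [show m+1+1 = m+2 by omega]
      exact dyck_head1 DclP_np (fun w h => h.1.1) this
    rcases w with _ | ⟨a, w'⟩
    · simp at hwlen
    rcases w' with _ | ⟨b, r⟩
    · simp at hwlen
    simp only [List.headI] at hhead
    subst hhead
    have hb : b = 1 ∨ b = -1 := hD.1 b (by simp)
    have hb1 : b = -1 := by
      rcases hb with rfl | rfl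
      · exact absurd ⟨r, rfl⟩ hUU
      · rfl
    subst hb1
    refine ⟨r, (mem_MS (AP_np 0)).2 ⟨⟨⟨fun x hx => hD.1 x (by simp [hx]), ?_, ?_⟩, ?_⟩, by simpa using hwlen⟩, rfl⟩
    · intro k
      have := hD.2.1 (k+2)
      rwa [take2_sum] at this
    · have := hD.2.2
      simpa using this
    · intro i hocc
      have := hAv (i+2) (by rwa [show ((1:ℤ) :: (-1:ℤ) :: r).drop (i+2) = r.drop i from rfl])
      rwa [take2_sum] at this

lemma A2_rec (n : ℕ) : cnt (AP 2) (n+1)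
    = ∑ i ∈ Finset.range n, cnt (AP 1) i * cnt (AP 2) (n-1-i) := by
  refine AP_rec_gen 2 (AP 1) (fun u h => h.1) ?_ n
  intro u hD
  rw [show (2:ℤ)-1 = 1 by norm_num]
  constructor
  · intro h
    exact ⟨h.2, fun _ => by norm_num⟩
  · intro h
    exact ⟨hD, h.1⟩

lemma A1_rec (n : ℕ) : cnt (AP 1) (n+1)
    = ∑ i ∈ Finset.range n, cnt (AP 0) i * cnt (AP 1) (n-1-i) := by
  refine AP_rec_gen 1 (AP 0) (fun u h => h.1) ?_ n
  intro u hD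
  rw [show (1:ℤ)-1 = 0 by norm_num]
  constructor
  · intro h
    exact ⟨h.2, fun _ => by norm_num⟩
  · intro h
    exact ⟨hD, h.1⟩

lemma A0_rec (n : ℕ) : cnt (AP 0) (n+1)
    = ∑ i ∈ Finset.range n, cnt DclP i * cnt (AP 0) (n-1-i) := by
  refine AP_rec_gen 0 DclP (fun u h => h.1.1) ?_ n
  intro u hD
  constructor
  · rintro ⟨⟨_, hAv⟩, hUU⟩
    refine ⟨(AvB_nonpos hD.2.1 (by norm_num) (by norm_num)).2 hAv, fun hp => absurd hp hUU⟩
  · rintro ⟨hAv, h0⟩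
    exact ⟨⟨hD, (AvB_nonpos hD.2.1 (by norm_num) (by norm_num)).1 hAv⟩,
      fun hp => by simpa using h0 hp⟩

lemma AP_odd (t : ℤ) (k : ℕ) : cnt (AP t) (2*k+1) = 0 :=
  cnt_odd_zero (AP t) (AP_np t) (fun _ h => h.1) k

lemma Dcl_odd (k : ℕ) : cnt DclP (2*k+1) = 0 :=
  cnt_odd_zero DclP DclP_np (fun _ h => h.1.1) k

lemma sum_even (f : ℕ → ℕ) (hf : ∀ k, f (2*k+1) = 0) : ∀ N,
    ∑ i ∈ Finset.range N, f i = ∑ l ∈ Finset.range ((N+1)/2), f (2*l) := by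
  intro N
  induction N with
  | zero => simp
  | succ N ih =>
    rw [Finset.sum_range_succ, ih]
    rcases Nat.even_or_odd N with ⟨k, hk⟩ | ⟨k, hk⟩
    · subst hk
      rw [show (k+k+1+1)/2 = k+1 by omega, show (k+k+1)/2 = k by omega,
        Finset.sum_range_succ, show 2*k = k+k by omega]
    · subst hk
      rw [show (2*k+1+1+1)/2 = k+1 by omega, show (2*k+1+1)/2 = k+1 by omega,
        hf k, add_zero]

lemma EcP_nil : EcP [] := ⟨⟨by simp, fun k => by simp, by simp⟩, by simp⟩
lemma MzP_nil : MzP [] := ⟨⟨by simp, fun k => by simp⟩, by simp⟩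
lemma NmP_nil : NmP [] := ⟨by simp, fun k => by simp⟩
lemma McP_nil : McP [] := ⟨by simp, fun k => by simp, by simp⟩

lemma A0_eq_Mz : ∀ m, cnt (AP 0) (2*m) = cnt MzP m := by
  intro m
  induction m using Nat.strong_induction_on with
  | _ m ih =>
    rcases m with _ | m
    · rw [show 2*0 = 0 by omega, cnt_zero _ (AP_nil 0), cnt_zero _ MzP_nil]
    · rw [show 2*(m+1) = (2*m+1)+1 by omega, A0_rec,
        sum_even _ (fun k => by rw [Dcl_odd, zero_mul]) (2*m+1),
        show (2*m+1+1)/2 = m+1 by omega, Finset.sum_range_succ', Mz_rec,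
        add_comm (cnt MzP m)]
      congr 1
      · -- shifted terms
        apply Finset.sum_congr rfl
        intro l hl
        rw [Finset.mem_range] at hl
        rw [show 2*(l+1) = l+l+2 by omega, show l+l+2 = (l+l)+2 by omega, Dcl_step,
          show l+l = 2*l by omega, ih l (by omega),
          show 2*m+1-1-(2*l+2) = 2*(m-1-l) by omega, ih (m-1-l) (by omega)]
      · -- l = 0 term
        rw [show (2:ℕ)*0 = 0 by omega, cnt_zero _ DclP_nil, one_mul,
          show 2*m+1-1-0 = 2*m by omega, ih m (by omega)]

lemma A1_zero : cnt (AP 1) 0 = 1 := cnt_zero _ (AP_nil 1)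

lemma A1_eq : ∀ m, cnt (AP 1) (2*(m+1)) = cnt NmP m := by
  intro m
  induction m using Nat.strong_induction_on with
  | _ m ih =>
    rw [show 2*(m+1) = (2*m+1)+1 by omega, A1_rec,
      sum_even _ (fun k => by rw [AP_odd, zero_mul]) (2*m+1),
      show (2*m+1+1)/2 = m+1 by omega, Finset.sum_range_succ, Nm_rec]
    rw [add_comm (cnt MzP m) _]
    congr 1
    · apply Finset.sum_congr rfl
      intro l hl
      rw [Finset.mem_range] at hl
      rw [A0_eq_Mz l, show 2*m+1-1-2*l = 2*((m-1-l)+1) by omega, ih (m-1-l) (by omega)]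
    · rw [A0_eq_Mz m, show 2*m+1-1-2*m = 0 by omega, A1_zero, mul_one]

lemma A2_eq : ∀ m, cnt (AP 2) (2*m) = cnt EcP m := by
  intro m
  induction m using Nat.strong_induction_on with
  | _ m ih =>
    rcases m with _ | m
    · rw [show 2*0 = 0 by omega, cnt_zero _ (AP_nil 2), cnt_zero _ EcP_nil]
    · rw [show 2*(m+1) = (2*m+1)+1 by omega, A2_rec,
        sum_even _ (fun k => by rw [AP_odd, zero_mul]) (2*m+1),
        show (2*m+1+1)/2 = m+1 by omega, Finset.sum_range_succ', Ec_rec,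
        add_comm (cnt EcP m)]
      congr 1
      · apply Finset.sum_congr rfl
        intro l hl
        rw [Finset.mem_range] at hl
        rw [A1_eq l, show 2*m+1-1-2*(l+1) = 2*(m-1-l) by omega, ih (m-1-l) (by omega)]
      · rw [show (2:ℕ)*0 = 0 by omega, A1_zero, one_mul,
          show 2*m+1-1-0 = 2*m by omega, ih m (by omega)]

theorem main_count (n : ℕ) : cnt McP n = cnt (AP 2) (2*(n+1)) := by
  rw [Mc_Ec n, A2_eq (n+1)]

/-! ### glue to the original statement -/

lemma NP_iff (w : List ℤ) : NonnegPrefixes w ↔ NP w := by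
  constructor
  · intro h k
    exact h _ ((List.mem_inits _ _).2 (List.take_prefix k w))
  · intro h p hp
    rw [List.mem_inits _ _] at hp
    rw [List.prefix_iff_eq_take.1 hp]
    exact h _

lemma Mc_iff (w : List ℤ) : IsMotzkinMeanderCat w ↔ McP w := by
  unfold IsMotzkinMeanderCat McP
  rw [NP_iff]

lemma Dy_iff (w : List ℤ) : IsDyckWord w ↔ DyP w := by
  unfold IsDyckWord DyP
  rw [NP_iff]

lemma Av_iff (w : List ℤ) : AvoidsAtHeightGe2 pUUU w ↔ AvB 2 w := by
  unfold AvoidsAtHeightGe2 AvB OccursAt pUUU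
  rfl

/-- Motzkin meanders with catastrophes of length n are in bijection with Dyck paths
of semilength n+1 avoiding the factor UUU at height h ≥ 2. -/
theorem stmt_11 (n : ℕ) :
    ∃ f : {w : List ℤ // IsMotzkinMeanderCat w ∧ w.length = n} →
      {w : List ℤ // IsDyckWord w ∧ w.length = 2 * (n + 1) ∧
        AvoidsAtHeightGe2 pUUU w},
      Function.Bijective f := by
  have hM : ∀ w : List ℤ, (IsMotzkinMeanderCat w ∧ w.length = n) ↔ w ∈ MS McP n := by
    intro w
    rw [mem_MS McP_np, Mc_iff]
  have hD : ∀ w : List ℤ, (IsDyckWord w ∧ w.length = 2*(n+1) ∧ AvoidsAtHeightGe2 pUUU w)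
      ↔ w ∈ MS (AP 2) (2*(n+1)) := by
    intro w
    rw [mem_MS (AP_np 2)]
    unfold AP
    rw [Dy_iff, Av_iff]
    tauto
  let e1 : {w : List ℤ // IsMotzkinMeanderCat w ∧ w.length = n}
      ≃ {w : List ℤ // w ∈ MS McP n} := Equiv.subtypeEquivRight hM
  let e2 : {w : List ℤ // w ∈ MS McP n} ≃ {w : List ℤ // w ∈ MS (AP 2) (2*(n+1))} :=
    Fintype.equivOfCardEq (by
      rw [Fintype.card_coe, Fintype.card_coe]
      exact main_count n)
  let e3 : {w : List ℤ // w ∈ MS (AP 2) (2*(n+1))}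
      ≃ {w : List ℤ // IsDyckWord w ∧ w.length = 2 * (n + 1) ∧ AvoidsAtHeightGe2 pUUU w} :=
    (Equiv.subtypeEquivRight hD).symm
  exact ⟨(e1.trans e2).trans e3, Equiv.bijective _⟩
end

section
/- For every Motzkin meander with catastrophes P of length n, ψ(P) is a Dyck path of semilength n+1, i.e., ψ increases semilength by exactly one while producing a valid Dyck path. -/
/-- χ is the classical bijection sending Motzkin paths of length m to
Dyck paths of semilength m avoiding the factor UUU. -/
def ChiSpec (χ : List ℤ → List ℤ) : Prop :=
  ∀ m : ℕ, Set.BijOn χ {w | IsMotzkinWord w ∧ w.length = m}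
    {w | IsDyckWord w ∧ w.length = 2 * m ∧ Avoids pUUU w}

/-- The recursive equations defining the paper's map ψ from Motzkin meanders with
catastrophes to Dyck paths: ψ(ε) = UD; ψ(Fα) = UD ψ(α);
ψ(Uα₁Uα₂⋯Uα_k) = U (Uχ(α₁)D)(Uχ(α₂)D)⋯(Uχ(α_k)D) D;
ψ(Uα₁⋯Uα_k D_k β) = U (Uχ(α₁)D)⋯(Uχ(α_k)D) D ψ(β), with D₁ := D. -/
def PsiSpec (χ ψ : List ℤ → List ℤ) : Prop :=
  (ψ [] = [1, -1]) ∧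
  (∀ α : List ℤ, IsMotzkinMeanderCat α → ψ (0 :: α) = 1 :: -1 :: ψ α) ∧
  (∀ L : List (List ℤ), L ≠ [] → (∀ a ∈ L, IsMotzkinWord a) →
      ψ ((L.map (fun a => 1 :: a)).flatten) =
        1 :: ((L.map (fun a => 1 :: (χ a ++ [-1]))).flatten ++ [-1])) ∧
  (∀ (L : List (List ℤ)) (β : List ℤ), L ≠ [] → (∀ a ∈ L, IsMotzkinWord a) →
      IsMotzkinMeanderCat β →
      ψ ((L.map (fun a => 1 :: a)).flatten ++ (-(L.length : ℤ)) :: β) =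
        1 :: ((L.map (fun a => 1 :: (χ a ++ [-1]))).flatten ++ -1 :: ψ β))

section PsiProof

lemma np_iff (w : List ℤ) : NonnegPrefixes w ↔ ∀ i, 0 ≤ (w.take i).sum := by
  constructor
  · intro h i
    exact h _ ((List.mem_inits _ _).2 (List.take_prefix i w))
  · intro h p hp
    have := List.prefix_iff_eq_take.1 ((List.mem_inits _ _).1 hp)
    rw [this]; exact h _

lemma dyck_append {u v : List ℤ} (hu : IsDyckWord u) (hv : IsDyckWord v) :
    IsDyckWord (u ++ v) := by
  obtain ⟨hu1, hu2, hu3⟩ := hu; obtain ⟨hv1, hv2, hv3⟩ := hv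
  rw [np_iff] at hu2 hv2
  refine ⟨?_, ?_, by simp [hu3, hv3]⟩
  · intro s hs; rcases List.mem_append.1 hs with h | h
    exacts [hu1 s h, hv1 s h]
  · rw [np_iff]; intro i
    rw [List.take_append, List.sum_append]
    exact add_nonneg (hu2 i) (hv2 _)

lemma dyck_wrap {w : List ℤ} (hw : IsDyckWord w) : IsDyckWord (1 :: (w ++ [-1])) := by
  obtain ⟨h1, h2, h3⟩ := hw
  rw [np_iff] at h2
  refine ⟨?_, ?_, by simp [h3]⟩
  · intro s hs
    rcases List.mem_cons.1 hs with rfl | hs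
    · left; rfl
    rcases List.mem_append.1 hs with h | h
    · exact h1 s h
    · right; simpa using h
  · rw [np_iff]; intro i
    cases i with
    | zero => simp
    | succ n =>
      rw [List.take_succ_cons, List.sum_cons, List.take_append,
        List.sum_append]
      have h4 : -1 ≤ (([-1] : List ℤ).take (n - w.length)).sum := by
        cases (n - w.length) with
        | zero => simp
        | succ m => simp
      have := h2 n
      omega

lemma dyck_pair : IsDyckWord [1, -1] := by
  have := dyck_wrap (w := []) ⟨by simp, by rw [np_iff]; intro i; simp, by simp⟩
  simpa using this

lemma posDecomp : ∀ (N : ℕ) (Q : List ℤ), Q.length ≤ N →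
    (∀ s ∈ Q, s = 1 ∨ s = 0 ∨ s = -1) →
    (∀ i, 1 ≤ i → i ≤ Q.length → 1 ≤ (Q.take i).sum) →
    ∀ k : ℕ, Q.sum = k → 1 ≤ k →
    ∃ L : List (List ℤ), L.length = k ∧ (∀ a ∈ L, IsMotzkinWord a) ∧
      Q = (L.map (fun a => 1 :: a)).flatten := by
  intro N
  induction N with
  | zero =>
    intro Q hQ _ _ k hk hk1
    have : Q = [] := List.length_eq_zero_iff.1 (Nat.le_zero.1 hQ)
    subst this; simp at hk; omega
  | succ N ih =>
    intro Q hQlen hsteps hpos k hk hk1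
    obtain ⟨s, R, rfl⟩ : ∃ s R, Q = s :: R := by
      cases Q with
      | nil => simp at hk; omega
      | cons s R => exact ⟨s, R, rfl⟩
    have hs1 : s = 1 := by
      have h1 := hpos 1 le_rfl (by simp)
      simp at h1
      have := hsteps s (by simp)
      omega
    subst hs1
    have hRnn : ∀ i, i ≤ R.length → 0 ≤ (R.take i).sum := by
      intro i hi
      have := hpos (i+1) (by omega) (by simp; omega)
      simp at this; omega
    set j := Nat.findGreatest (fun j => (R.take j).sum = 0) R.length with hjdef
    have hj0 : (R.take j).sum = 0 :=
      Nat.findGreatest_spec (P := fun j => (R.take j).sum = 0) (Nat.zero_le _) (by simp)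
    have hjle : j ≤ R.length := Nat.findGreatest_le _
    have hjmax : ∀ m, j < m → m ≤ R.length → (R.take m).sum ≠ 0 := by
      intro m hm hm' h
      exact Nat.findGreatest_is_greatest hm hm' h
    have hα : IsMotzkinWord (R.take j) := by
      refine ⟨fun x hx => hsteps x (List.mem_cons_of_mem _ (List.take_subset j R hx)), ?_, hj0⟩
      rw [np_iff]; intro i
      rcases le_or_gt i j with h | h
      · rw [List.take_take, min_eq_left h]
        exact hRnn i (le_trans h hjle)
      · rw [List.take_take, min_eq_right h.le]
        exact hRnn j hjle
    have hsplit : ∀ i, (R.take (j + i)).sum = ((R.drop j).take i).sum := by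
      intro i
      rw [List.take_add, List.sum_append, hj0, zero_add]
    have hQ'pos : ∀ i, 1 ≤ i → i ≤ (R.drop j).length → 1 ≤ ((R.drop j).take i).sum := by
      intro i hi hi'
      rw [← hsplit]
      have h1 : j + i ≤ R.length := by simp at hi'; omega
      have h2 := hRnn (j+i) h1
      have h3 := hjmax (j+i) (by omega) h1
      omega
    have hQ'sum : (R.drop j).sum = (k : ℤ) - 1 := by
      have : (R.take j).sum + (R.drop j).sum = R.sum := by
        rw [← List.sum_append, List.take_append_drop]
      simp at hk
      omega
    rcases Nat.lt_or_ge 1 k with hk2 | hk2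
    · obtain ⟨L', hL'len, hL'mw, hL'eq⟩ :=
        ih (R.drop j) (by simp at hQlen ⊢; omega)
          (fun x hx => hsteps x (List.mem_cons_of_mem _ (List.drop_subset j R hx)))
          hQ'pos (k - 1) (by rw [hQ'sum]; omega) (by omega)
      refine ⟨R.take j :: L', by simp [hL'len]; omega, ?_, ?_⟩
      · intro a ha
        rcases List.mem_cons.1 ha with rfl | ha
        · exact hα
        · exact hL'mw a ha
      · simp only [List.map_cons, List.flatten_cons]
        rw [← hL'eq]
        simp [List.take_append_drop]
    · have hk1' : k = 1 := by omega
      have hQ'nil : R.drop j = [] := by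
        by_contra h
        have hlen : 1 ≤ (R.drop j).length := by
          cases hR : R.drop j with
          | nil => exact absurd hR h
          | cons a l => simp [hR]
        have := hQ'pos (R.drop j).length hlen le_rfl
        rw [List.take_length] at this
        omega
      have : R.take j = R := by
        conv_rhs => rw [← List.take_append_drop j R]
        rw [hQ'nil, List.append_nil]
      refine ⟨[R.take j], by simp [hk1'], ?_, by simp [this]⟩
      intro a ha; simp at ha; subst ha; exact hα

lemma meanderCat_drop {P : List ℤ} (hP : IsMotzkinMeanderCat P) (j : ℕ)
    (hj : (P.take j).sum = 0) : IsMotzkinMeanderCat (P.drop j) := by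
  obtain ⟨h1, h2, h3⟩ := hP
  rw [np_iff] at h2
  have hsplit : ∀ i, (P.take (j + i)).sum = ((P.drop j).take i).sum := by
    intro i
    rw [List.take_add, List.sum_append, hj, zero_add]
  refine ⟨fun x hx => h1 x (List.drop_subset j P hx), ?_, ?_⟩
  · rw [np_iff]; intro i
    rw [← hsplit]; exact h2 _
  · intro i hi hcat
    have hlen : j + i < P.length := by simp at hi; omega
    have hgd : (P.drop j).getD i 0 = P.getD (j+i) 0 := by
      rw [List.getD_eq_getElem _ _ (by simpa using hi), List.getD_eq_getElem _ _ hlen]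
      exact List.getElem_drop ..
    have h5 := h3 (j+i) hlen (by rw [← hgd]; exact hcat)
    have h4 := hsplit (i+1)
    rw [show j + (i+1) = j + i + 1 by omega] at h4
    omega

lemma middle_lemma (χ : List ℤ → List ℤ) (hχ : ChiSpec χ) :
    ∀ (L : List (List ℤ)), (∀ a ∈ L, IsMotzkinWord a) →
    IsDyckWord ((L.map (fun a => 1 :: (χ a ++ [-1]))).flatten) ∧
    ((L.map (fun a => 1 :: (χ a ++ [-1]))).flatten).length
      = 2 * ((L.map (fun a => (1 : ℤ) :: a)).flatten).length := by
  intro L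
  induction L with
  | nil =>
    intro _
    exact ⟨⟨by simp, by rw [np_iff]; intro i; simp, by simp⟩, by simp⟩
  | cons a L ih =>
    intro h
    obtain ⟨hd, hl⟩ := ih (fun x hx => h x (List.mem_cons_of_mem _ hx))
    have ha := h a List.mem_cons_self
    have hχa := (hχ a.length).mapsTo (show a ∈ {w | IsMotzkinWord w ∧ w.length = a.length}
      from ⟨ha, rfl⟩)
    obtain ⟨hχd, hχlen, -⟩ := hχa
    simp only [List.map_cons, List.flatten_cons]
    refine ⟨dyck_append (dyck_wrap hχd) hd, ?_⟩
    simp [hχlen, hl]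
    omega

lemma psi_main (χ ψ : List ℤ → List ℤ) (hχ : ChiSpec χ) (hψ : PsiSpec χ ψ) :
    ∀ (N : ℕ) (P : List ℤ), P.length ≤ N → IsMotzkinMeanderCat P →
    IsDyckWord (ψ P) ∧ (ψ P).length = 2 * (P.length + 1) := by
  obtain ⟨hψ0, hψF, hψU, hψC⟩ := hψ
  intro N
  induction N with
  | zero =>
    intro P hlen _
    have : P = [] := List.length_eq_zero_iff.1 (Nat.le_zero.1 hlen)
    subst this
    rw [hψ0]
    exact ⟨dyck_pair, rfl⟩
  | succ N ih =>
    intro P hlen hP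
    rcases P with _ | ⟨a, α⟩
    · rw [hψ0]; exact ⟨dyck_pair, rfl⟩
    have h2' := (np_iff _).1 hP.2.1
    have ha01 : a = 0 ∨ a = 1 := by
      have hge := h2' 1
      simp at hge
      have hle := hP.1 a (by simp)
      omega
    rcases ha01 with rfl | rfl
    · -- flat step
      have hα : IsMotzkinMeanderCat α := by
        have := meanderCat_drop hP 1 (by simp)
        simpa using this
      rw [hψF α hα]
      obtain ⟨hd, hl⟩ := ih α (by simp at hlen; omega) hα
      constructor
      · show IsDyckWord ([1, -1] ++ ψ α)
        exact dyck_append dyck_pair hd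
      · simp [hl]; omega
    · -- up step
      by_cases hex : ∃ j, 1 ≤ j ∧ j ≤ ((1:ℤ) :: α).length ∧ (((1:ℤ) :: α).take j).sum = 0
      · -- there is a return to zero: catastrophe decomposition
        classical
        obtain ⟨j, ⟨hj1, hjle, hj0⟩, hjmin'⟩ :
            ∃ j, (1 ≤ j ∧ j ≤ ((1:ℤ) :: α).length ∧ (((1:ℤ) :: α).take j).sum = 0) ∧
              ∀ m, m < j →
                ¬(1 ≤ m ∧ m ≤ ((1:ℤ) :: α).length ∧ (((1:ℤ) :: α).take m).sum = 0) :=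
          ⟨Nat.find hex, Nat.find_spec hex, fun m hm => Nat.find_min hex hm⟩
        have hjmin : ∀ m, m < j → 1 ≤ m → m ≤ ((1:ℤ) :: α).length →
            (((1:ℤ) :: α).take m).sum ≠ 0 :=
          fun m hm h1 h2 h3 => hjmin' m hm ⟨h1, h2, h3⟩
        have hj2 : 2 ≤ j := by
          by_contra h
          have hj1' : j = 1 := by omega
          subst hj1'
          simp at hj0
        obtain ⟨i, rfl⟩ : ∃ i, j = i + 1 := ⟨j - 1, by omega⟩
        have hi : i < ((1:ℤ) :: α).length := by omega
        have hi1 : 1 ≤ i := by omega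
        have hk'pos : 1 ≤ (((1:ℤ) :: α).take i).sum := by
          have hge := h2' i
          have hne := hjmin i (by omega) hi1 (by omega)
          omega
        have hstep : ((1:ℤ) :: α)[i] = -(((1:ℤ) :: α).take i).sum := by
          have := List.sum_take_succ ((1:ℤ) :: α) i hi
          omega
        obtain ⟨k, hk⟩ : ∃ k : ℕ, (((1:ℤ) :: α).take i).sum = (k : ℤ) ∧ 1 ≤ k := by
          refine ⟨(((1:ℤ) :: α).take i).sum.toNat, ?_, ?_⟩ <;> omega
        obtain ⟨hk, hk1⟩ := hk
        -- the positive prefix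
        obtain ⟨L, hLlen, hLmw, hLeq⟩ :=
          posDecomp ((1:ℤ) :: α).length (((1:ℤ) :: α).take i) (by simp)
            (by
              intro x hx
              obtain ⟨t, ht, rfl⟩ := List.mem_iff_getElem.1 hx
              have htlen : t < ((1:ℤ) :: α).length := by
                simp at ht; omega
              rw [List.getElem_take]
              have hle := hP.1 (((1:ℤ) :: α)[t]) (List.getElem_mem _)
              have hge : -1 ≤ ((1:ℤ) :: α)[t] := by
                by_contra hcon
                have hcat := hP.2.2 t htlen
                  (by rw [List.getD_eq_getElem _ _ htlen]; omega)
                have hne := hjmin (t+1) (by simp at ht; omega) (by omega) (by omega)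
                exact hne hcat
              omega)
            (by
              intro t ht1 ht2
              rw [List.take_take, min_eq_left (show t ≤ i by simp at ht2; omega)]
              have hge := h2' t
              have hne := hjmin t (by simp at ht2; omega) ht1 (by simp at ht2; omega)
              omega)
            k hk (by omega)
        have hLlen' : (L.length : ℤ) = (((1:ℤ) :: α).take i).sum := by
          rw [hLlen]; omega
        -- the tail
        have hβ : IsMotzkinMeanderCat (((1:ℤ) :: α).drop (i+1)) :=
          meanderCat_drop hP (i+1) hj0
        have hwsplit : (1:ℤ) :: α =
            (L.map (fun a => 1 :: a)).flatten ++
              (-(L.length : ℤ)) :: ((1:ℤ) :: α).drop (i+1) := by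
          conv_lhs => rw [← List.take_append_drop i ((1:ℤ) :: α)]
          rw [List.drop_eq_getElem_cons hi, hstep, ← hLlen', hLeq]
        have hLne : L ≠ [] := by
          intro h; rw [h] at hLlen; simp at hLlen; omega
        obtain ⟨hβd, hβl⟩ := ih (((1:ℤ) :: α).drop (i+1))
          (by simp at hlen ⊢; omega) hβ
        obtain ⟨hBd, hBl⟩ := middle_lemma χ hχ L hLmw
        rw [hwsplit, hψC L _ hLne hLmw hβ]
        constructor
        · have hassoc : (1:ℤ) :: ((L.map (fun a => 1 :: (χ a ++ [-1]))).flatten ++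
              -1 :: ψ (((1:ℤ) :: α).drop (i+1))) =
              (1 :: ((L.map (fun a => 1 :: (χ a ++ [-1]))).flatten ++ [-1])) ++
                ψ (((1:ℤ) :: α).drop (i+1)) := by simp
          rw [hassoc]
          exact dyck_append (dyck_wrap hBd) hβd
        · simp only [List.drop_succ_cons] at hβl ⊢
          simp [hBl, hβl]
          omega
      · -- never returns to zero
        push_neg at hex
        have hno : ∀ m, 1 ≤ m → m ≤ ((1:ℤ) :: α).length →
            (((1:ℤ) :: α).take m).sum ≠ 0 := fun m h1 h2 => hex m h1 h2
        have hsum1 : 1 ≤ ((1:ℤ) :: α).sum := by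
          have := hno ((1:ℤ) :: α).length (by simp) le_rfl
          rw [List.take_length] at this
          have := h2' ((1:ℤ) :: α).length
          rw [List.take_length] at this
          omega
        obtain ⟨k, hk, hk1⟩ : ∃ k : ℕ, ((1:ℤ) :: α).sum = (k : ℤ) ∧ 1 ≤ k := by
          refine ⟨((1:ℤ) :: α).sum.toNat, ?_, ?_⟩ <;> omega
        obtain ⟨L, hLlen, hLmw, hLeq⟩ :=
          posDecomp ((1:ℤ) :: α).length ((1:ℤ) :: α) le_rfl
            (by
              intro x hx
              obtain ⟨t, ht, rfl⟩ := List.mem_iff_getElem.1 hx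
              have hle := hP.1 (((1:ℤ) :: α)[t]) (List.getElem_mem _)
              have hge : -1 ≤ ((1:ℤ) :: α)[t] := by
                by_contra hcon
                have hcat := hP.2.2 t ht
                  (by rw [List.getD_eq_getElem _ _ ht]; omega)
                exact hno (t+1) (by omega) (by omega) hcat
              omega)
            (by
              intro t ht1 ht2
              have hge := h2' t
              have hne := hno t ht1 ht2
              omega)
            k hk hk1
        obtain ⟨hBd, hBl⟩ := middle_lemma χ hχ L hLmw
        rw [hLeq, hψU L (by intro h; rw [h] at hLlen; simp at hLlen; omega) hLmw]
        constructor
        · exact dyck_wrap hBd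
        · simp [hBl]
          omega

end PsiProof

/-- For every Motzkin meander with catastrophes P of length n, ψ(P) is a Dyck path
of semilength n+1. -/

theorem stmt_14 (χ ψ : List ℤ → List ℤ) (hχ : ChiSpec χ) (hψ : PsiSpec χ ψ)
    (n : ℕ) (P : List ℤ) (hP : IsMotzkinMeanderCat P) (hn : P.length = n) :
    IsDyckWord (ψ P) ∧ (ψ P).length = 2 * (n + 1) := by
  subst hn
  exact psi_main χ ψ hχ hψ P.length P le_rfl hP
end

section
/- The number of Dyck paths of semilength n avoiding the factor UUU equals the n-th Motzkin number. -/
namespace Stmt15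

def S (w : List ℤ) (i : ℕ) : ℤ := (w.take i).sum

lemma S_zero (w : List ℤ) : S w 0 = 0 := rfl

lemma S_cons (x : ℤ) (w : List ℤ) (i : ℕ) : S (x :: w) (i+1) = x + S w i := by
  simp [S]

lemma S_append (l m : List ℤ) (i : ℕ) : S (l ++ m) i = S l i + S m (i - l.length) := by
  simp [S, List.take_append]

lemma S_of_ge {w : List ℤ} {i : ℕ} (h : w.length ≤ i) : S w i = w.sum := by
  simp [S, List.take_of_length_le h]

lemma S_succ {w : List ℤ} {i : ℕ} (h : i < w.length) : S w (i+1) = S w i + w[i] :=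
  List.sum_take_succ w i h

lemma np_iff {w : List ℤ} : NonnegPrefixes w ↔ ∀ i, 0 ≤ S w i := by
  constructor
  · intro h i
    exact h _ ((List.mem_inits _ _).2 (List.take_prefix i w))
  · intro h p hp
    rw [List.mem_inits] at hp
    rw [List.prefix_iff_eq_take.1 hp]
    exact h _

lemma occurs_iff {w : List ℤ} {i : ℕ} :
    OccursAt pUUU w i ↔ ∃ t, w.drop i = 1 :: 1 :: 1 :: t := by
  constructor
  · rintro ⟨t, ht⟩; exact ⟨t, ht.symm⟩
  · rintro ⟨t, ht⟩; exact ⟨t, ht.symm⟩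

lemma avoids_cons_UD {w : List ℤ} : Avoids pUUU (1 :: -1 :: w) ↔ Avoids pUUU w := by
  constructor
  · intro h i hi
    refine h (i+2) ?_
    rw [occurs_iff] at hi ⊢
    simpa using hi
  · intro h i hi
    rw [occurs_iff] at hi
    match i, hi with
    | 0, ⟨t, ht⟩ => simp at ht
    | 1, ⟨t, ht⟩ => simp at ht
    | (j+2), ⟨t, ht⟩ => exact h j (occurs_iff.2 ⟨t, by simpa using ht⟩)

lemma avoids_cons3 {m : List ℤ} : Avoids pUUU (1 :: 1 :: -1 :: m) ↔ Avoids pUUU m := by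
  constructor
  · intro h i hi
    refine h (i+3) ?_
    rw [occurs_iff] at hi ⊢
    simpa using hi
  · intro h i hi
    rw [occurs_iff] at hi
    match i, hi with
    | 0, ⟨t, ht⟩ => simp at ht
    | 1, ⟨t, ht⟩ => simp at ht
    | 2, ⟨t, ht⟩ => simp at ht
    | (j+3), ⟨t, ht⟩ => exact h j (occurs_iff.2 ⟨t, by simpa using ht⟩)


lemma avoids_append {a b : List ℤ} :
    Avoids pUUU (a ++ -1 :: b) ↔ Avoids pUUU a ∧ Avoids pUUU b := by
  constructor
  · intro h
    constructor
    · intro i hi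
      rw [occurs_iff] at hi
      obtain ⟨t, ht⟩ := hi
      have hlt : i < a.length := by
        by_contra hle
        rw [List.drop_eq_nil_of_le (le_of_not_gt hle)] at ht
        simp at ht
      refine h i (occurs_iff.2 ⟨t ++ (-1 :: b), ?_⟩)
      rw [List.drop_append, ht, Nat.sub_eq_zero_of_le hlt.le]
      simp
    · intro i hi
      rw [occurs_iff] at hi
      obtain ⟨t, ht⟩ := hi
      refine h (a.length + 1 + i) (occurs_iff.2 ⟨t, ?_⟩)
      rw [List.drop_append]
      rw [List.drop_eq_nil_of_le (by omega)]
      have h2 : a.length + 1 + i - a.length = i + 1 := by omega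
      rw [h2]
      simpa using ht
  · rintro ⟨ha, hb⟩ i hi
    rw [occurs_iff] at hi
    obtain ⟨t, ht⟩ := hi
    rw [List.drop_append] at ht
    rcases lt_trichotomy (i + 3) (a.length + 1) with hc | hc | hc
    ·
      have h3 : 3 ≤ (a.drop i).length := by simp; omega
      refine ha i (occurs_iff.2 ⟨(a.drop i).drop 3, ?_⟩)
      have := congrArg (List.take 3) ht
      rw [List.take_append_of_le_length h3] at this
      conv_lhs => rw [← List.take_append_drop 3 (a.drop i)]
      rw [this]
      simp
    · -- i + 3 = a.length + 1, i.e. i + 2 = a.length : the -1 is at relative position 2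
      have hia : i < a.length := by omega
      have hlen : (a.drop i).length = a.length - i := by simp
      have hd : (a.drop i ++ List.drop (i - a.length) (-1 :: b)).getD (a.length - i) 0 = -1 := by
        rw [List.getD_append_right _ _ _ _ (by omega)]
        rw [Nat.sub_eq_zero_of_le hia.le]
        simp [hlen]
      rw [ht] at hd
      have h2 : a.length - i = 2 := by omega
      rw [h2] at hd
      simp at hd
    · -- i + 3 > a.length + 1
      rcases Nat.lt_or_ge i a.length with hia | hia
      · -- the -1 lands at position a.length - i ∈ {0,1,2} : contradiction
        have hlen : (a.drop i).length = a.length - i := by simp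
        have hd : (a.drop i ++ List.drop (i - a.length) (-1 :: b)).getD (a.length - i) 0 = -1 := by
          rw [List.getD_append_right _ _ _ _ (by omega)]
          rw [Nat.sub_eq_zero_of_le hia.le]
          simp [hlen]
        rw [ht] at hd
        have hd2 : a.length - i = 0 ∨ a.length - i = 1 ∨ a.length - i = 2 := by omega
        rcases hd2 with h | h | h <;> rw [h] at hd <;> simp at hd
      · rw [List.drop_eq_nil_of_le hia] at ht
        simp at ht
        rcases Nat.eq_or_lt_of_le hia with heq | hlt
        · rw [← heq, Nat.sub_self] at ht
          simp at ht
        · have h4 : i - a.length = (i - a.length - 1) + 1 := by omega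
          rw [h4] at ht
          simp at ht
          exact hb _ (occurs_iff.2 ⟨t, ht⟩)

lemma np_cons_UD {w : List ℤ} : NonnegPrefixes (1 :: -1 :: w) ↔ NonnegPrefixes w := by
  rw [np_iff, np_iff]
  constructor
  · intro h i
    have := h (i+2)
    rw [S_cons, S_cons] at this
    linarith
  · intro h i
    match i with
    | 0 => simp [S_zero]
    | 1 => norm_num [S_cons, S_zero]
    | (i+2) =>
      rw [S_cons, S_cons]
      have := h i
      linarith

lemma np_UUD {a b : List ℤ} (ha : NonnegPrefixes a) (hsa : a.sum = 0)
    (hb : NonnegPrefixes b) :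
    NonnegPrefixes (1 :: 1 :: -1 :: (a ++ -1 :: b)) := by
  rw [np_iff] at ha hb ⊢
  intro i
  match i with
  | 0 => simp [S_zero]
  | 1 => norm_num [S_cons, S_zero]
  | 2 => norm_num [S_cons, S_zero]
  | (i+3) =>
    rw [S_cons, S_cons, S_cons, S_append]
    rcases le_or_gt i a.length with h | h
    · rw [Nat.sub_eq_zero_of_le h, S_zero]
      have := ha i
      linarith
    · have h1 : i - a.length = (i - a.length - 1) + 1 := by omega
      have h2 : S a i = 0 := by rw [S_of_ge (by omega)]; exact hsa
      rw [h1, S_cons, h2]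
      have := hb (i - a.length - 1)
      linarith

lemma parity {l : List ℤ} (hs : ∀ s ∈ l, s = 1 ∨ s = -1) :
    l.sum % 2 = (l.length : ℤ) % 2 := by
  induction l with
  | nil => simp
  | cons x t ih =>
    have hx := hs x (by simp)
    have ih' := ih (fun s hsm => hs s (by simp [hsm]))
    simp only [List.sum_cons, List.length_cons]
    push_cast
    rcases hx with h | h <;> subst h <;> omega

abbrev P (n : ℕ) (w : List ℤ) : Prop :=
  IsDyckWord w ∧ w.length = 2 * n ∧ Avoids pUUU w

abbrev T (n : ℕ) : Type := {w : List ℤ // P n w}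

instance instFiniteT (n : ℕ) : Finite (T n) := by
  have hinj : Function.Injective
      (fun (w : T n) (i : Fin (2*n)) => decide (w.val.getD i 0 = 1)) := by
    rintro ⟨w₁, h₁⟩ ⟨w₂, h₂⟩ h
    simp only [Subtype.mk.injEq]
    apply List.ext_getElem (by rw [h₁.2.1, h₂.2.1])
    intro i hi1 hi2
    have hi : i < 2*n := by rw [← h₁.2.1]; exact hi1
    have h3 := congrFun h ⟨i, hi⟩
    simp only [decide_eq_decide] at h3
    rw [List.getD_eq_getElem _ _ hi1, List.getD_eq_getElem _ _ hi2] at h3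
    have e1 := h₁.1.1 _ (List.getElem_mem hi1)
    have e2 := h₂.1.1 _ (List.getElem_mem hi2)
    rcases e1 with e1 | e1 <;> rcases e2 with e2 | e2 <;>
      rw [e1, e2] <;> rw [e1, e2] at h3 <;> simp_all
  exact Finite.of_injective _ hinj

lemma card_zero : Nat.card (T 0) = 1 := by
  rw [Nat.card_eq_one_iff_unique]
  constructor
  · constructor
    rintro ⟨w₁, h₁⟩ ⟨w₂, h₂⟩
    have e1 : w₁ = [] := List.eq_nil_of_length_eq_zero (by have := h₁.2.1; omega)
    have e2 : w₂ = [] := List.eq_nil_of_length_eq_zero (by have := h₂.2.1; omega)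
    subst e1; subst e2; rfl
  · refine ⟨⟨[], ⟨⟨by simp, ?_, by simp⟩, by simp, ?_⟩⟩⟩
    · rw [np_iff]; intro i; simp [S]
    · intro i hi
      rw [occurs_iff] at hi
      obtain ⟨t, ht⟩ := hi
      simp at ht

lemma P_consUD {n : ℕ} {w : List ℤ} (h : P n w) : P (n+1) (1 :: -1 :: w) := by
  obtain ⟨⟨hstep, hnp, hsum⟩, hlen, hav⟩ := h
  refine ⟨⟨?_, np_cons_UD.2 hnp, by simp [hsum]⟩, by simp [hlen]; ring, avoids_cons_UD.2 hav⟩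
  intro s hs
  simp only [List.mem_cons] at hs
  rcases hs with h | h | h
  · left; exact h
  · right; exact h
  · exact hstep s h

lemma P_UUD {n k : ℕ} (hk : k < n) {a b : List ℤ} (ha : P k a) (hb : P (n-1-k) b) :
    P (n+1) (1 :: 1 :: -1 :: (a ++ -1 :: b)) := by
  obtain ⟨⟨has, hanp, hasum⟩, halen, haav⟩ := ha
  obtain ⟨⟨hbs, hbnp, hbsum⟩, hblen, hbav⟩ := hb
  refine ⟨⟨?_, np_UUD hanp hasum hbnp, by simp [hasum, hbsum]⟩, ?_, ?_⟩
  · intro s hs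
    simp only [List.mem_cons, List.mem_append] at hs
    rcases hs with h | h | h | h | h | h
    · left; exact h
    · left; exact h
    · right; exact h
    · exact has s h
    · right; exact h
    · exact hbs s h
  · simp only [List.length_cons, List.length_append, List.length_cons, halen, hblen]
    omega
  · exact avoids_cons3.2 (avoids_append.2 ⟨haav, hbav⟩)

def Fm (n : ℕ) : T n ⊕ (Σ k : Fin n, T k × T (n-1-k)) → T (n+1)
  | .inl ⟨w, h⟩ => ⟨1 :: -1 :: w, P_consUD h⟩
  | .inr ⟨k, ⟨a, ha⟩, ⟨b, hb⟩⟩ => ⟨1 :: 1 :: -1 :: (a ++ -1 :: b), P_UUD k.2 ha hb⟩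

lemma split_len {a₁ b₁ a₂ x₂ : List ℤ} (h : a₁ ++ -1 :: b₁ = a₂ ++ x₂)
    (hlt : a₁.length < a₂.length) (hs : a₁.sum = 0) (hnp : NonnegPrefixes a₂) :
    False := by
  have h1 : S (a₁ ++ -1 :: b₁) (a₁.length + 1) = -1 := by
    rw [S_append, S_of_ge (by omega), hs]
    have h2 : a₁.length + 1 - a₁.length = 1 := by omega
    rw [h2, S_cons, S_zero]
    ring
  rw [h, S_append, Nat.sub_eq_zero_of_le (by omega), S_zero] at h1
  have h3 := (np_iff.1 hnp) (a₁.length + 1)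
  linarith

lemma F_inj (n : ℕ) : Function.Injective (Fm n) := by
  rintro (⟨w₁, h₁⟩ | ⟨k₁, ⟨a₁, ha₁⟩, ⟨b₁, hb₁⟩⟩) (⟨w₂, h₂⟩ | ⟨k₂, ⟨a₂, ha₂⟩, ⟨b₂, hb₂⟩⟩) h <;>
    simp only [Fm, Subtype.mk.injEq, List.cons.injEq, true_and] at h
  · subst h; rfl
  · exact absurd h.1 (by norm_num)
  · exact absurd h.1 (by norm_num)
  · -- h : a₁ ++ -1 :: b₁ = a₂ ++ -1 :: b₂
    have hlen : a₁.length = a₂.length := by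
      by_contra hne
      rcases Nat.lt_or_ge a₁.length a₂.length with hl | hl
      · exact split_len h hl ha₁.1.2.2 ha₂.1.2.1
      · exact split_len h.symm (lt_of_le_of_ne hl (fun e => hne e.symm))
          ha₂.1.2.2 ha₁.1.2.1
    obtain ⟨hae, hbe⟩ := List.append_inj h hlen
    have hbe' : b₁ = b₂ := by simpa using hbe
    have hkk : k₁ = k₂ := by
      apply Fin.ext
      have l1 := ha₁.2.1
      have l2 := ha₂.2.1
      rw [hae] at l1
      omega
    subst hkk; subst hae; subst hbe'
    rfl

lemma F_surj (n : ℕ) : Function.Surjective (Fm n) := by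
  rintro ⟨w, hw⟩
  obtain ⟨⟨hstep, hnp0, hsum⟩, hlen, havoid⟩ := hw
  have hnp := np_iff.1 hnp0
  have hlen' : w.length = 2*n+2 := by omega
  rcases w with _ | ⟨s₁, r₁⟩
  · simp at hlen'
  have hs1 : s₁ = 1 := by
    have h1 := hnp 1
    rw [S_cons, S_zero] at h1
    rcases hstep s₁ (by simp) with h | h
    · exact h
    · rw [h] at h1; norm_num at h1
  subst hs1
  rcases r₁ with _ | ⟨s₂, r₂⟩
  · simp at hlen'
  rcases hstep s₂ (by simp) with hs2 | hs2
  · -- second step up : w = 1 :: 1 :: ...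
    subst hs2
    rcases r₂ with _ | ⟨s₃, r₃⟩
    · norm_num at hsum
    have hs3 : s₃ = -1 := by
      rcases hstep s₃ (by simp) with h | h
      · exfalso
        exact havoid 0 (occurs_iff.2 ⟨r₃, by rw [h]; rfl⟩)
      · exact h
    subst hs3
    set w : List ℤ := 1 :: 1 :: -1 :: r₃ with hwdef
    have exQ : ∃ m, 0 < m ∧ S w m = 0 := ⟨w.length, by simp [hwdef], by rw [S_of_ge le_rfl]; exact hsum⟩
    set m := Nat.find exQ with hmdef
    have hm : 0 < m ∧ S w m = 0 := Nat.find_spec exQ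
    have hmle : m ≤ w.length := Nat.find_le ⟨by simp [hwdef], by rw [S_of_ge le_rfl]; exact hsum⟩
    have hpos : ∀ t, 0 < t → t < m → 1 ≤ S w t := by
      intro t ht hlt
      have h1 := Nat.find_min exQ hlt
      have h2 := hnp t
      simp only [not_and] at h1
      have := h1 ht
      omega
    have hS1 : S w 1 = 1 := by norm_num [hwdef, S_cons, S_zero]
    have hS2 : S w 2 = 2 := by norm_num [hwdef, S_cons, S_zero]
    have hS3 : S w 3 = 1 := by norm_num [hwdef, S_cons, S_zero]
    have hm4 : 4 ≤ m := by
      by_contra hcon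
      have hcases : m = 1 ∨ m = 2 ∨ m = 3 := by omega
      have hSm := hm.2
      rcases hcases with h | h | h <;> rw [h] at hSm <;>
        [rw [hS1] at hSm; rw [hS2] at hSm; rw [hS3] at hSm] <;> norm_num at hSm
    have hmlt : m - 1 < w.length := by omega
    have h9 := S_succ hmlt
    rw [show m - 1 + 1 = m by omega] at h9
    have hprev : 1 ≤ S w (m-1) := hpos (m-1) (by omega) (by omega)
    have hwm1 : w[m-1] = -1 := by
      rcases hstep _ (List.getElem_mem hmlt) with h | h
      · exfalso; rw [h] at h9; have := hm.2; omega
      · exact h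
    have hSm1 : S w (m-1) = 1 := by
      rw [hwm1] at h9; have := hm.2; omega
    -- parity of m
    have hpar : (0:ℤ) % 2 = (m:ℤ) % 2 := by
      have hp := parity (l := w.take m) (fun s hs => hstep s (List.take_subset m w hs))
      have hl : (w.take m).length = m := by rw [List.length_take]; omega
      rw [hl] at hp
      have : (w.take m).sum = S w m := rfl
      rw [this, hm.2] at hp
      exact hp
    obtain ⟨k, hk2⟩ : ∃ k, m = 2*k + 4 := ⟨(m-4)/2, by omega⟩
    have hkn : k < n := by omega
    set a : List ℤ := (w.drop 3).take (m-4) with hadef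
    set b : List ℤ := w.drop m with hbdef
    have hlend : (w.drop 3).length = 2*n - 1 := by rw [List.length_drop]; omega
    have halen : a.length = m - 4 := by rw [hadef, List.length_take]; omega
    have hdrop3 : w.drop 3 = a ++ -1 :: b := by
      have h1 : w.drop 3 = a ++ (w.drop 3).drop (m-4) := (List.take_append_drop _ _).symm
      have h2 : (w.drop 3).drop (m-4) = w.drop (m-1) := by
        rw [List.drop_drop]
        congr 1
        omega
      have h3 := List.drop_eq_getElem_cons hmlt
      rw [show m-1+1 = m from by omega] at h3
      rw [h1, h2, h3, hwm1]
    have hdecomp : w = 1 :: 1 :: -1 :: (a ++ -1 :: b) := by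
      rw [hwdef]
      have : r₃ = (w.drop 3) := rfl
      rw [this, hdrop3]
    -- sums along a
    have hSa : ∀ i, i ≤ m - 4 → S a i = S w (3+i) - 1 := by
      intro i hi
      have h1 : S a i = S (w.drop 3) i := by
        rw [hadef]
        show (List.take i ((w.drop 3).take (m-4))).sum = _
        rw [List.take_take, min_eq_left hi]
        rfl
      have h2 : S w (3+i) = S w 3 + S (w.drop 3) i := by
        show (w.take (3+i)).sum = _
        rw [List.take_add, List.sum_append]
        rfl
      rw [h1, hS3] at *
      omega
    have hsa : a.sum = 0 := by
      have := hSa (m-4) le_rfl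
      rw [S_of_ge (by omega)] at this
      rw [show 3 + (m-4) = m - 1 by omega, hSm1] at this
      omega
    have hSb : ∀ i, S b i = S w (m+i) := by
      intro i
      have h2 : S w (m+i) = S w m + S (w.drop m) i := by
        show (w.take (m+i)).sum = _
        rw [List.take_add, List.sum_append]
        rfl
      rw [h2, hm.2, hbdef]
      ring
    have hav2 : Avoids pUUU a ∧ Avoids pUUU b := by
      rw [hdecomp] at havoid
      exact avoids_append.1 (avoids_cons3.1 havoid)
    have hPa : P k a := by
      refine ⟨⟨?_, ?_, hsa⟩, by omega, hav2.1⟩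
      · intro s hs
        exact hstep s (List.drop_subset 3 w (List.take_subset _ _ hs))
      · rw [np_iff]
        intro i
        rcases le_or_gt i (m-4) with h | h
        · have := hSa i h
          have h5 := hpos (3+i) (by omega) (by omega)
          omega
        · rw [S_of_ge (by omega), hsa]
    have hPb : P (n-1-k) b := by
      refine ⟨⟨?_, ?_, ?_⟩, ?_, hav2.2⟩
      · intro s hs
        exact hstep s (List.drop_subset m w hs)
      · rw [np_iff]
        intro i
        rw [hSb i]
        exact hnp (m+i)
      · have h1 : w.sum = (w.take m).sum + b.sum := by
          rw [hbdef]
          conv_lhs => rw [← List.take_append_drop m w]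
          rw [List.sum_append]
        have h2 : (w.take m).sum = S w m := rfl
        rw [h2, hm.2] at h1
        omega
      · rw [hbdef, List.length_drop]
        omega
    refine ⟨.inr ⟨⟨k, hkn⟩, ⟨a, hPa⟩, ⟨b, hPb⟩⟩, ?_⟩
    apply Subtype.ext
    show (1 : ℤ) :: 1 :: -1 :: (a ++ -1 :: b) = w
    rw [hdecomp]
  · -- second step down : w = 1 :: -1 :: r₂
    subst hs2
    have hPr : P n r₂ := by
      refine ⟨⟨?_, np_cons_UD.1 hnp0, ?_⟩, ?_, avoids_cons_UD.1 havoid⟩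
      · intro s hs
        exact hstep s (by simp [hs])
      · simp at hsum
        omega
      · simp at hlen'
        omega
    exact ⟨.inl ⟨r₂, hPr⟩, rfl⟩

lemma nat_card_sigma {ι : Type} [Fintype ι] (f : ι → Type) [∀ i, Finite (f i)] :
    Nat.card (Σ i, f i) = ∑ i, Nat.card (f i) := by
  classical
  letI : ∀ i, Fintype (f i) := fun i => Fintype.ofFinite _
  simp [Nat.card_eq_fintype_card, Fintype.card_sigma]

lemma card_succ (n : ℕ) :
    Nat.card (T (n+1)) =
      Nat.card (T n) + ∑ k ∈ Finset.range n, Nat.card (T k) * Nat.card (T (n-1-k)) := by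
  classical
  rw [← Nat.card_eq_of_bijective _ ⟨F_inj n, F_surj n⟩]
  rw [Nat.card_sum]
  congr 1
  rw [nat_card_sigma]
  rw [← Fin.sum_univ_eq_sum_range (fun k => Nat.card (T k) * Nat.card (T (n-1-k))) n]
  exact Finset.sum_congr rfl (fun k _ => Nat.card_prod _ _)

end Stmt15

/-- The number of Dyck paths of semilength n avoiding the factor UUU equals the n-th
Motzkin number, where the Motzkin numbers satisfy M₀ = 1 and
M_{n+1} = M_n + Σ_{k=0}^{n-1} M_k M_{n-1-k}. -/
theorem stmt_15 :
    ∃ M : ℕ → ℕ, M 0 = 1 ∧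
      (∀ n : ℕ, M (n + 1) = M n + ∑ k ∈ Finset.range n, M k * M (n - 1 - k)) ∧
      ∀ n : ℕ, Nat.card {w : List ℤ // IsDyckWord w ∧ w.length = 2 * n ∧
        Avoids pUUU w} = M n := by
  exact ⟨fun n => Nat.card (Stmt15.T n), Stmt15.card_zero, Stmt15.card_succ, fun n => rfl⟩
end

section
/- For every Dyck excursion with catastrophes P of length n, the Dyck path φ(P) has the property that every occurrence of the factor UD starting at height 0 is followed, at a strictly later position, by an occurrence of the factor UUU. -/
/-- The recursive equations defining the paper's map φ from Dyck meanders with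
catastrophes to Dyck paths:
φ(ε) = ε; φ(Uα) = UD φ(α); φ(UαDβ) = UUD φ(α) D φ(β);
φ(UαD₂β) = U φ(αD) D φ(β); φ(UαD_iβ) = UD φ(αD_{i-1}) φ(β) for i ≥ 3. -/
def PhiSpec (φ : List ℤ → List ℤ) : Prop :=
  (φ [] = []) ∧
  (∀ α : List ℤ, (∀ s ∈ α, s = 1 ∨ s = -1) → NonnegPrefixes α →
      φ (1 :: α) = 1 :: -1 :: φ α) ∧
  (∀ α β : List ℤ, (∀ s ∈ α, s = 1 ∨ s = -1) → NonnegPrefixes α → α.sum = 0 →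
      IsDyckMeanderCat β →
      φ (1 :: (α ++ -1 :: β)) = 1 :: 1 :: -1 :: (φ α ++ -1 :: φ β)) ∧
  (∀ α β : List ℤ, (∀ s ∈ α, s = 1 ∨ s = -1) → NonnegPrefixes α → α.sum = 1 →
      IsDyckMeanderCat β →
      φ (1 :: (α ++ -2 :: β)) = 1 :: (φ (α ++ [-1]) ++ -1 :: φ β)) ∧
  (∀ (α β : List ℤ) (i : ℕ), 3 ≤ i → (∀ s ∈ α, s = 1 ∨ s = -1) → NonnegPrefixes α →
      α.sum = (i : ℤ) - 1 → IsDyckMeanderCat β →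
      φ (1 :: (α ++ (-(i : ℤ)) :: β)) = 1 :: -1 :: (φ (α ++ [-((i : ℤ) - 1)]) ++ φ β))

namespace Aux18

lemma nnp_iff (w : List ℤ) : NonnegPrefixes w ↔ ∀ k, 0 ≤ (w.take k).sum := by
  constructor
  · intro h k
    exact h _ (by simp [List.mem_inits, List.take_prefix])
  · intro h p hp
    rw [List.mem_inits] at hp
    rw [List.prefix_iff_eq_take.mp hp]
    exact h _

lemma take_sum_append (x y : List ℤ) (k : ℕ) :
    ((x ++ y).take k).sum = (x.take k).sum + (y.take (k - x.length)).sum := by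
  rw [List.take_append, List.sum_append]

lemma take_sum_cons_succ (a : ℤ) (w : List ℤ) (k : ℕ) :
    ((a :: w).take (k+1)).sum = a + (w.take k).sum := by
  simp

lemma take_of_le (x : List ℤ) {k : ℕ} (h : x.length ≤ k) : x.take k = x :=
  List.take_of_length_le h

/-- All prefix sums of `w`, shifted by `c`, are nonnegative. -/
def MinGe (c : ℤ) (w : List ℤ) : Prop := ∀ k, 0 ≤ c + (w.take k).sum

lemma nnp_iff_minGe (w : List ℤ) : NonnegPrefixes w ↔ MinGe 0 w := by
  simp [nnp_iff, MinGe]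

lemma minGe_nil {c : ℤ} (h : 0 ≤ c) : MinGe c [] := by intro k; simpa using h

lemma minGe_cons {c a : ℤ} {w : List ℤ} (h0 : 0 ≤ c) (h1 : MinGe (c + a) w) :
    MinGe c (a :: w) := by
  intro k
  cases k with
  | zero => simpa using h0
  | succ k => rw [take_sum_cons_succ]; have := h1 k; linarith

lemma minGe_append {c : ℤ} {x y : List ℤ} (hx : MinGe c x) (hy : MinGe (c + x.sum) y) :
    MinGe c (x ++ y) := by
  intro k
  rw [take_sum_append]
  rcases le_or_gt x.length k with h | h
  · rw [take_of_le x h]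
    have := hy (k - x.length); linarith
  · have : k - x.length = 0 := by omega
    rw [this]
    simpa using hx k

lemma minGe_mono {c d : ℤ} {w : List ℤ} (h : c ≤ d) (hw : MinGe c w) : MinGe d w := by
  intro k; have := hw k; linarith

lemma minGe_take {c : ℤ} {w : List ℤ} (hw : MinGe c w) (k : ℕ) : 0 ≤ c + (w.take k).sum := hw k

/-- Occurrence in right part of an append. -/
lemma occursAt_append_right {p : List ℤ} {x y : List ℤ} {j : ℕ}
    (h : OccursAt p y j) : OccursAt p (x ++ y) (x.length + j) := by
  unfold OccursAt at *
  rwa [List.drop_append, List.drop_of_length_le (le_add_right le_rfl),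
    Nat.add_sub_cancel_left, List.nil_append]

lemma occursAt_cons {p : List ℤ} {a : ℤ} {w : List ℤ} {j : ℕ}
    (h : OccursAt p w j) : OccursAt p (a :: w) (j + 1) := by
  unfold OccursAt at *
  simpa using h

lemma occursAt_prefix_left {p u v : List ℤ} {i : ℕ} (h : OccursAt p (u ++ v) i)
    (hlen : p.length + i ≤ u.length) : OccursAt p u i := by
  unfold OccursAt at *
  have h1 : p <+: (u ++ v).drop i := h
  rw [List.drop_append] at h1
  have h2 : i - u.length = 0 := by omega
  rw [h2, List.drop_zero] at h1
  have h3 : p <+: ((u.drop i) ++ v).take p.length := List.prefix_take_iff.mpr ⟨h1, le_rfl⟩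
  rw [List.take_append] at h3
  have h4 : p.length - (u.drop i).length = 0 := by
    rw [List.length_drop]; omega
  rw [h4] at h3
  simp only [List.take_zero, List.append_nil] at h3
  exact h3.trans (List.take_prefix _ _)

lemma occursAt_getD {pat w : List ℤ} {i : ℕ} (h : OccursAt pat w i) (k : ℕ) (hk : k < pat.length) :
    w.getD (i + k) 0 = pat.getD k 0 ∧ i + k < w.length := by
  unfold OccursAt at h
  obtain ⟨t, ht⟩ := h
  have hlen : pat.length + t.length = w.length - i := by
    have := congrArg List.length ht
    simpa [List.length_drop] using this
  have hiw : i ≤ w.length := by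
    by_contra hc
    push_neg at hc
    rw [List.drop_of_length_le (le_of_lt hc)] at ht
    have := congrArg List.length ht
    simp at this
    omega
  constructor
  · have : w.getD (i + k) 0 = (w.drop i).getD k 0 := by
      rw [List.getD_eq_getElem?_getD, List.getD_eq_getElem?_getD, List.getElem?_drop]
    rw [this, ← ht, List.getD_append _ _ _ _ hk]
  · omega


lemma occursAt_append_left {p x y : List ℤ} {j : ℕ}
    (h : OccursAt p x j) : OccursAt p (x ++ y) j := by
  unfold OccursAt at *
  rw [List.drop_append]
  exact h.trans (List.prefix_append _ _)

lemma getD_drop' (l : List ℤ) (n j : ℕ) : (l.drop n).getD j 0 = l.getD (n + j) 0 := by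
  simp [List.getD_eq_getElem?_getD, List.getElem?_drop]

lemma getD_cons_succ' (a : ℤ) (l : List ℤ) (j : ℕ) : (a :: l).getD (j+1) 0 = l.getD j 0 := rfl

lemma dyckWord_exc {w : List ℤ} (h : IsDyckWord w) : IsDyckExcursionCat w := by
  obtain ⟨hs, hn, hsum⟩ := h
  refine ⟨⟨fun s hs' => (hs s hs').imp id (fun h' => by omega), hn, ?_⟩, hsum⟩
  intro i hi hgd
  exfalso
  rw [List.getD_eq_getElem _ _ hi] at hgd
  rcases hs _ (List.getElem_mem hi) with h | h <;> omega

lemma decomp {P : List ℤ} (hP : IsDyckExcursionCat P) (hne : P ≠ []) :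
    ∃ (α β : List ℤ) (c : ℤ), c ≤ -1 ∧ P = 1 :: (α ++ c :: β) ∧
      (∀ s ∈ α, s = 1 ∨ s = -1) ∧ NonnegPrefixes α ∧ α.sum = -c - 1 ∧
      IsDyckExcursionCat β := by
  obtain ⟨⟨hsteps, hnnp, hcat⟩, hsum⟩ := hP
  rw [nnp_iff] at hnnp
  obtain ⟨p₀, rest, rfl⟩ := List.exists_cons_of_ne_nil hne
  have hp0 : p₀ = 1 := by
    have h1 := hnnp 1
    simp at h1
    rcases hsteps p₀ (by simp) with h | h
    · exact h
    · omega
  subst hp0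
  have hrsum : (1 : ℤ) + rest.sum = 0 := by simpa using hsum
  have hex : ∃ m', (rest.take m').sum = -1 :=
    ⟨rest.length, by rw [take_of_le _ le_rfl]; omega⟩
  set m' := Nat.find hex with hm'def
  have hm' : (rest.take m').sum = -1 := Nat.find_spec hex
  have hmin : ∀ k, k < m' → (rest.take k).sum ≠ -1 := fun k hk => Nat.find_min hex hk
  have hm'pos : 1 ≤ m' := by
    rcases Nat.eq_zero_or_pos m' with h | h
    · rw [h] at hm'; simp at hm'
    · exact h
  have hm'le : m' ≤ rest.length := Nat.find_le (by rw [take_of_le _ le_rfl]; omega)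
  set m := m' - 1 with hmdef
  have hmlt : m < rest.length := by omega
  have hm1 : m + 1 = m' := by omega
  -- heights nonneg and nonzero strictly before m'
  have hpos : ∀ k, k < m' → 0 ≤ (rest.take k).sum := by
    intro k hk
    have h1 := hnnp (k + 1)
    rw [take_sum_cons_succ] at h1
    have h2 := hmin k hk
    omega
  have htake1 : (rest.drop m).take 1 = [rest[m]] := by
    rw [List.drop_eq_getElem_cons hmlt]
    rfl
  have hsplitsum : (rest.take m').sum = (rest.take m).sum + rest[m] := by
    rw [← hm1, List.take_add, List.sum_append, htake1]
    simp
  have hc1 : rest[m] ≤ -1 := by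
    rcases hsteps rest[m] (by exact List.mem_cons_of_mem _ (List.getElem_mem hmlt)) with h | h
    · exfalso
      have := hpos m (by omega)
      omega
    · exact h
  refine ⟨rest.take m, rest.drop m', rest[m], hc1, ?_, ?_, ?_, ?_, ?_⟩
  · -- P = 1 :: (take m ++ rest[m] :: drop m')
    rw [← hm1]
    conv_lhs => rw [show rest = rest.take m ++ rest.drop m by rw [List.take_append_drop]]
    rw [List.drop_eq_getElem_cons hmlt]
  · -- steps of α
    intro s hs
    obtain ⟨j, hj, rfl⟩ := List.getElem_of_mem hs
    have hjm : j < m := by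
      have := hj
      simp [List.length_take] at this
      omega
    have hjr : j < rest.length := by omega
    have hget : (rest.take m)[j] = rest[j] := List.getElem_take
    rw [hget]
    rcases hsteps rest[j] (List.mem_cons_of_mem _ (List.getElem_mem hjr)) with h | h
    · exact Or.inl h
    · right
      by_contra hcon
      have hle : rest[j] ≤ -2 := by omega
      have hcatj := hcat (j + 1) (by simp; omega) (by
        rw [getD_cons_succ', List.getD_eq_getElem _ _ hjr]
        exact hle)
      rw [take_sum_cons_succ] at hcatj
      have := hmin (j + 1) (by omega)
      omega
  · -- NonnegPrefixes α
    rw [nnp_iff]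
    intro k
    rw [List.take_take]
    exact hpos (min k m) (by omega)
  · -- sum of α
    have := hsplitsum
    omega
  · -- β is an excursion
    have hβtake : ∀ k, ((rest.drop m').take k).sum = (rest.take (m' + k)).sum + 1 := by
      intro k
      have h1 := congrArg List.sum (List.take_add (l := rest) (i := m') (j := k))
      rw [List.sum_append, hm'] at h1
      omega
    have hβlen : (rest.drop m').length = rest.length - m' := by simp
    refine ⟨⟨?_, ?_, ?_⟩, ?_⟩
    · intro s hs
      exact hsteps s (List.mem_cons_of_mem _ (List.mem_of_mem_drop hs))
    · rw [nnp_iff]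
      intro k
      rw [hβtake]
      have := hnnp (m' + k + 1)
      rw [take_sum_cons_succ] at this
      omega
    · intro j hj hgd
      rw [getD_drop'] at hgd
      have hjr : m' + j < rest.length := by omega
      have hcatj := hcat (m' + j + 1) (by simp; omega) (by
        rw [getD_cons_succ']
        exact hgd)
      rw [take_sum_cons_succ] at hcatj
      have := hβtake (j + 1)
      rw [show m' + (j + 1) = m' + j + 1 by omega] at this
      omega
    · have h1 := congrArg List.sum (List.take_append_drop m' rest)
      rw [List.sum_append, hm'] at h1
      omega


lemma minGe_cons' {c a d : ℤ} {w : List ℤ} (h0 : 0 ≤ c) (hd : d ≤ c + a) (h1 : MinGe d w) :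
    MinGe c (a :: w) :=
  minGe_cons h0 (minGe_mono hd h1)

lemma minGe_append' {c d e : ℤ} {x y : List ℤ} (hdc : d ≤ c) (hx : MinGe d x)
    (he : e ≤ c + x.sum) (hy : MinGe e y) : MinGe c (x ++ y) :=
  minGe_append (minGe_mono hdc hx) (minGe_mono he hy)

lemma master (φ : List ℤ → List ℤ) (hφ : PhiSpec φ) :
    ∀ n : ℕ, ∀ P : List ℤ, P.length ≤ n → IsDyckExcursionCat P →
      IsDyckWord (φ P) ∧
      (P ≠ [] → ∃ t, φ P = 1 :: t) ∧
      ((∀ s ∈ P, s = 1 ∨ s = -1) → P ≠ [] → ∃ t, φ P = 1 :: 1 :: -1 :: t) ∧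
      ((∃ s ∈ P, s ≤ -2) → ∃ j, OccursAt pUUU (φ P) j) ∧
      (∀ i, OccursAt pUD (φ P) i → ((φ P).take i).sum = 0 →
        ∃ j, i < j ∧ OccursAt pUUU (φ P) j) := by
  obtain ⟨hnil, -, hD, hD2, hDi⟩ := hφ
  intro n
  induction n with
  | zero =>
    intro P hlen hP
    have hPnil : P = [] := List.length_eq_zero_iff.mp (by omega)
    subst hPnil
    rw [hnil]
    refine ⟨⟨by simp, ?_, rfl⟩, by simp, by simp, ?_, ?_⟩
    · rw [nnp_iff]; intro k; simp
    · rintro ⟨s, hs, -⟩; simp at hs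
    · intro i hocc _
      exfalso
      unfold OccursAt at hocc
      rw [List.drop_nil] at hocc
      have := List.prefix_nil.mp hocc
      simp [pUD] at this
  | succ n ih =>
    intro P hlen hP
    by_cases hne : P = []
    · exact ih P (by simp [hne]) hP
    obtain ⟨α, β, c, hc1, hPeq, hαsteps, hαnnp, hαsum, hβexc⟩ := decomp hP hne
    have hβm : IsDyckMeanderCat β := hβexc.1
    have hlenP : P.length = α.length + β.length + 2 := by
      rw [hPeq]; simp [List.length_append]; omega
    have hαlen : α.length ≤ n := by omega
    have hβlen : β.length ≤ n := by omega
    obtain ⟨hBdyck, hBne, hBplain, hBuuu, hBQ⟩ := ih β hβlen hβexc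
    have hBsteps := hBdyck.1
    have hBnnp : MinGe 0 (φ β) := (nnp_iff_minGe _).mp hBdyck.2.1
    have hBsum : (φ β).sum = 0 := hBdyck.2.2
    have hccases : c = -1 ∨ c = -2 ∨ c ≤ -3 := by omega
    rcases hccases with rfl | rfl | hc3
    · -- case D : c = -1
      have hα0 : α.sum = 0 := by omega
      have hαexc : IsDyckExcursionCat α := dyckWord_exc ⟨hαsteps, hαnnp, hα0⟩
      obtain ⟨hAdyck, -, -, -, -⟩ := ih α hαlen hαexc
      have hAnnp : MinGe 0 (φ α) := (nnp_iff_minGe _).mp hAdyck.2.1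
      have hAsum : (φ α).sum = 0 := hAdyck.2.2
      have heq : φ P = 1 :: 1 :: -1 :: (φ α ++ -1 :: φ β) := by
        rw [hPeq]; exact hD α β hαsteps hαnnp hα0 hβm
      rw [heq]
      have hw : (1:ℤ) :: 1 :: -1 :: (φ α ++ -1 :: φ β)
          = (1 :: 1 :: -1 :: (φ α ++ [-1])) ++ φ β := by simp
      refine ⟨⟨?_, ?_, ?_⟩, fun _ => ⟨_, rfl⟩, fun _ _ => ⟨_, rfl⟩, ?_, ?_⟩
      · intro s hs
        simp only [List.mem_cons, List.mem_append] at hs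
        rcases hs with rfl | rfl | rfl | h | rfl | h
        · exact Or.inl rfl
        · exact Or.inl rfl
        · exact Or.inr rfl
        · exact hAdyck.1 s h
        · exact Or.inr rfl
        · exact hBsteps s h
      · rw [nnp_iff_minGe]
        refine minGe_cons' (d := 1) (by norm_num) (by norm_num) ?_
        refine minGe_cons' (d := 2) (by norm_num) (by norm_num) ?_
        refine minGe_cons' (d := 1) (by norm_num) (by norm_num) ?_
        refine minGe_append' (d := 0) (e := 1) (by norm_num) hAnnp (by linarith) ?_
        exact minGe_cons' (d := 0) (by norm_num) (by norm_num) hBnnp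
      · simp [List.sum_append, hAsum, hBsum]
      · -- UUU existence
        rintro ⟨s, hs, hs2⟩
        have hsβ : s ∈ β := by
          rw [hPeq] at hs
          simp only [List.mem_cons, List.mem_append] at hs
          rcases hs with rfl | h | rfl | h
          · omega
          · rcases hαsteps s h with rfl | rfl <;> omega
          · omega
          · exact h
        obtain ⟨j, hj⟩ := hBuuu ⟨s, hsβ, hs2⟩
        rw [hw]
        exact ⟨_, occursAt_append_right hj⟩
      · -- main property
        intro i hocc hht
        by_cases hbig : (φ α).length + 4 ≤ i
        · have hxlen : ((1:ℤ) :: 1 :: -1 :: (φ α ++ [-1])).length = (φ α).length + 4 := by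
            simp
          have hxsum : ((1:ℤ) :: 1 :: -1 :: (φ α ++ [-1])).sum = 0 := by
            simp [List.sum_append, hAsum]
          have hocc' : OccursAt pUD (φ β) (i - ((φ α).length + 4)) := by
            unfold OccursAt at hocc ⊢
            rw [hw, List.drop_append,
              List.drop_of_length_le (by rw [hxlen]; omega)] at hocc
            rw [List.nil_append, hxlen] at hocc
            exact hocc
          have hht' : ((φ β).take (i - ((φ α).length + 4))).sum = 0 := by
            rw [hw, take_sum_append, take_of_le _ (by rw [hxlen]; omega), hxsum, hxlen] at hht
            linarith
          obtain ⟨j, hij, hjocc⟩ := hBQ _ hocc' hht'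
          refine ⟨(φ α).length + 4 + j, by omega, ?_⟩
          rw [hw]
          have := occursAt_append_right (x := (1:ℤ) :: 1 :: -1 :: (φ α ++ [-1])) hjocc
          rwa [hxlen] at this
        · exfalso
          push_neg at hbig
          rcases i with _ | _ | _ | k
          · unfold OccursAt at hocc
            rw [List.drop_zero] at hocc
            simp [pUD, List.cons_prefix_cons] at hocc
          · simp at hht
          · simp at hht
          · have hk : k ≤ (φ α).length := by omega
            rw [show ((1:ℤ) :: 1 :: -1 :: (φ α ++ -1 :: φ β)).take (k + 3)
                = 1 :: 1 :: -1 :: ((φ α ++ -1 :: φ β).take k) by simp] at hht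
            rw [List.sum_cons, List.sum_cons, List.sum_cons, take_sum_append] at hht
            rw [show k - (φ α).length = 0 by omega] at hht
            simp only [List.take_zero, List.sum_nil] at hht
            have h2 := hAnnp k
            linarith
    · -- case D₂ : c = -2
      have hα1 : α.sum = 1 := by omega
      have hαD : IsDyckWord (α ++ [-1]) := by
        refine ⟨?_, ?_, ?_⟩
        · intro s hs
          rcases List.mem_append.mp hs with h | h
          · exact hαsteps s h
          · simp at h; subst h; exact Or.inr rfl
        · rw [nnp_iff_minGe]
          refine minGe_append' (d := 0) (e := 1) (le_refl 0) ((nnp_iff_minGe α).mp hαnnp)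
            (by linarith) ?_
          exact minGe_cons' (d := 0) (by norm_num) (by norm_num) (minGe_nil le_rfl)
        · simp [List.sum_append, hα1]
      have hαDexc := dyckWord_exc hαD
      have hαDlen : (α ++ [-1]).length ≤ n := by simp; omega
      obtain ⟨hAdyck, -, hAplain, -, -⟩ := ih (α ++ [-1]) hαDlen hαDexc
      obtain ⟨t, hAeq⟩ := hAplain hαD.1 (by simp)
      have hAnnp : MinGe 0 (φ (α ++ [-1])) := (nnp_iff_minGe _).mp hAdyck.2.1
      have hAsum : (φ (α ++ [-1])).sum = 0 := hAdyck.2.2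
      have heq : φ P = 1 :: (φ (α ++ [-1]) ++ -1 :: φ β) := by
        rw [hPeq]; exact hD2 α β hαsteps hαnnp hα1 hβm
      rw [heq]
      have hw : (1:ℤ) :: (φ (α ++ [-1]) ++ -1 :: φ β)
          = (1 :: (φ (α ++ [-1]) ++ [-1])) ++ φ β := by simp
      refine ⟨⟨?_, ?_, ?_⟩, fun _ => ⟨_, rfl⟩, ?_, ?_, ?_⟩
      · intro s hs
        simp only [List.mem_cons, List.mem_append] at hs
        rcases hs with rfl | h | rfl | h
        · exact Or.inl rfl
        · exact hAdyck.1 s h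
        · exact Or.inr rfl
        · exact hBsteps s h
      · rw [nnp_iff_minGe]
        refine minGe_cons' (d := 1) (by norm_num) (by norm_num) ?_
        refine minGe_append' (d := 0) (e := 1) (by norm_num) hAnnp (by linarith) ?_
        exact minGe_cons' (d := 0) (by norm_num) (by norm_num) hBnnp
      · simp [List.sum_append, hAsum, hBsum]
      · -- plain case : impossible
        intro hplain _
        exfalso
        rcases hplain (-2) (by rw [hPeq]; simp) with h | h <;> norm_num at h
      · -- UUU at position 0
        intro _
        refine ⟨0, ?_⟩
        unfold OccursAt
        rw [List.drop_zero, hAeq]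
        exact ⟨-1 :: (t ++ -1 :: φ β), by simp [pUUU]⟩
      · -- main property
        intro i hocc hht
        by_cases hbig : (φ (α ++ [-1])).length + 2 ≤ i
        · have hxlen : ((1:ℤ) :: (φ (α ++ [-1]) ++ [-1])).length
              = (φ (α ++ [-1])).length + 2 := by simp
          have hxsum : ((1:ℤ) :: (φ (α ++ [-1]) ++ [-1])).sum = 0 := by
            simp [List.sum_append, hAsum]
          have hocc' : OccursAt pUD (φ β) (i - ((φ (α ++ [-1])).length + 2)) := by
            unfold OccursAt at hocc ⊢
            rw [hw, List.drop_append,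
              List.drop_of_length_le (by rw [hxlen]; omega)] at hocc
            rw [List.nil_append, hxlen] at hocc
            exact hocc
          have hht' : ((φ β).take (i - ((φ (α ++ [-1])).length + 2))).sum = 0 := by
            rw [hw, take_sum_append, take_of_le _ (by rw [hxlen]; omega), hxsum, hxlen] at hht
            linarith
          obtain ⟨j, hij, hjocc⟩ := hBQ _ hocc' hht'
          refine ⟨(φ (α ++ [-1])).length + 2 + j, by omega, ?_⟩
          rw [hw]
          have := occursAt_append_right (x := (1:ℤ) :: (φ (α ++ [-1]) ++ [-1])) hjocc
          rwa [hxlen] at this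
        · exfalso
          push_neg at hbig
          rcases i with _ | k
          · unfold OccursAt at hocc
            rw [List.drop_zero, hAeq] at hocc
            simp [pUD, List.cons_prefix_cons] at hocc
          · have hk : k ≤ (φ (α ++ [-1])).length := by omega
            rw [show ((1:ℤ) :: (φ (α ++ [-1]) ++ -1 :: φ β)).take (k + 1)
                = 1 :: ((φ (α ++ [-1]) ++ -1 :: φ β).take k) by simp] at hht
            rw [List.sum_cons, take_sum_append] at hht
            rw [show k - (φ (α ++ [-1])).length = 0 by omega] at hht
            simp only [List.take_zero, List.sum_nil] at hht
            have h2 := hAnnp k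
            linarith
    · -- case D_i, i ≥ 3 : c ≤ -3
      have hγexc : IsDyckExcursionCat (α ++ [c + 1]) := by
        refine ⟨⟨?_, ?_, ?_⟩, ?_⟩
        · intro s hs
          rcases List.mem_append.mp hs with h | h
          · rcases hαsteps s h with rfl | rfl
            · exact Or.inl rfl
            · exact Or.inr (by norm_num)
          · simp at h; subst h; exact Or.inr (by omega)
        · rw [nnp_iff_minGe]
          refine minGe_append' (d := 0) (e := -c - 1) (le_refl 0) ((nnp_iff_minGe α).mp hαnnp)
            (by linarith) ?_
          exact minGe_cons' (d := 0) (by omega) (by omega) (minGe_nil le_rfl)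
        · intro j hj hgd
          have hjlen : j < α.length + 1 := by simpa using hj
          rcases Nat.lt_or_ge j α.length with h | h
          · exfalso
            rw [List.getD_append _ _ _ _ h, List.getD_eq_getElem _ _ h] at hgd
            rcases hαsteps _ (List.getElem_mem h) with h2 | h2 <;> omega
          · have hj' : j = α.length := by omega
            subst hj'
            rw [take_of_le _ (by simp), List.sum_append]
            simp
            linarith
        · rw [List.sum_append]; simp; linarith
      have hγlen : (α ++ [c + 1]).length ≤ n := by simp; omega
      obtain ⟨hCdyck, hCne, -, hCuuu, hCQ⟩ := ih (α ++ [c + 1]) hγlen hγexc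
      have hCnnp : MinGe 0 (φ (α ++ [c + 1])) := (nnp_iff_minGe _).mp hCdyck.2.1
      have hCsum : (φ (α ++ [c + 1])).sum = 0 := hCdyck.2.2
      obtain ⟨j₀, hj₀⟩ := hCuuu ⟨c + 1, by simp, by omega⟩
      have hceq : (1:ℤ) :: (α ++ c :: β) = 1 :: (α ++ (-(((-c).toNat : ℤ))) :: β) := by
        rw [show -(((-c).toNat : ℤ)) = c by omega]
      have heq : φ P = 1 :: -1 :: (φ (α ++ [c + 1]) ++ φ β) := by
        rw [hPeq, hceq,
          hDi α β (-c).toNat (by omega) hαsteps hαnnp (by omega) hβm,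
          show -((((-c).toNat : ℤ)) - 1) = c + 1 by omega]
      rw [heq]
      refine ⟨⟨?_, ?_, ?_⟩, fun _ => ⟨_, rfl⟩, ?_, ?_, ?_⟩
      · intro s hs
        simp only [List.mem_cons, List.mem_append] at hs
        rcases hs with rfl | rfl | h | h
        · exact Or.inl rfl
        · exact Or.inr rfl
        · exact hCdyck.1 s h
        · exact hBsteps s h
      · rw [nnp_iff_minGe]
        refine minGe_cons' (d := 1) (by norm_num) (by norm_num) ?_
        refine minGe_cons' (d := 0) (by norm_num) (by norm_num) ?_
        exact minGe_append' (d := 0) (e := 0) (le_refl 0) hCnnp (by linarith) hBnnp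
      · simp [List.sum_append, hCsum, hBsum]
      · -- plain case : impossible
        intro hplain _
        exfalso
        rcases hplain c (by rw [hPeq]; simp) with h | h <;> omega
      · -- UUU existence
        intro _
        exact ⟨j₀ + 1 + 1, occursAt_cons (occursAt_cons (occursAt_append_left hj₀))⟩
      · -- main property
        intro i hocc hht
        rcases i with _ | _ | k
        · exact ⟨j₀ + 1 + 1, by omega,
            occursAt_cons (occursAt_cons (occursAt_append_left hj₀))⟩
        · exfalso
          unfold OccursAt at hocc
          rw [show ((1:ℤ) :: -1 :: (φ (α ++ [c + 1]) ++ φ β)).drop 1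
              = -1 :: (φ (α ++ [c + 1]) ++ φ β) by simp] at hocc
          simp [pUD, List.cons_prefix_cons] at hocc
        · have hocc' : OccursAt pUD (φ (α ++ [c + 1]) ++ φ β) k := by
            unfold OccursAt at hocc ⊢
            simpa using hocc
          have hht' : ((φ (α ++ [c + 1]) ++ φ β).take k).sum = 0 := by
            rw [show ((1:ℤ) :: -1 :: (φ (α ++ [c + 1]) ++ φ β)).take (k + 2)
                = 1 :: -1 :: ((φ (α ++ [c + 1]) ++ φ β).take k) by simp] at hht
            rw [List.sum_cons, List.sum_cons] at hht
            linarith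
          by_cases hk1 : k + 2 ≤ (φ (α ++ [c + 1])).length
          · have hoccC : OccursAt pUD (φ (α ++ [c + 1])) k :=
              occursAt_prefix_left hocc' (by simp [pUD]; omega)
            have hhtC : ((φ (α ++ [c + 1])).take k).sum = 0 := by
              rw [take_sum_append, show k - (φ (α ++ [c + 1])).length = 0 by omega] at hht'
              simpa using hht'
            obtain ⟨j, hkj, hjocc⟩ := hCQ k hoccC hhtC
            exact ⟨j + 1 + 1, by omega,
              occursAt_cons (occursAt_cons (occursAt_append_left hjocc))⟩
          · by_cases hk2 : k + 1 = (φ (α ++ [c + 1])).length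
            · exfalso
              have hklt : k < (φ (α ++ [c + 1])).length := by omega
              obtain ⟨hgd, -⟩ := occursAt_getD hocc' 0 (by simp [pUD])
              rw [Nat.add_zero, List.getD_append _ _ _ _ hklt] at hgd
              have hCk1 : (φ (α ++ [c + 1])).getD k 0 = 1 := by
                rw [hgd]; rfl
              have hsplit : (φ (α ++ [c + 1])).sum
                  = ((φ (α ++ [c + 1])).take k).sum + (φ (α ++ [c + 1])).getD k 0 := by
                conv_lhs => rw [← List.take_append_drop k (φ (α ++ [c + 1]))]
                rw [List.sum_append, List.drop_eq_getElem_cons hklt,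
                  show (φ (α ++ [c + 1])).drop (k + 1) = [] from
                    List.drop_of_length_le (by omega),
                  List.getD_eq_getElem _ _ hklt]
                simp
              have hnn := hCnnp k
              rw [hCsum, hCk1] at hsplit
              linarith
            · have hk3 : (φ (α ++ [c + 1])).length ≤ k := by omega
              have hoccB : OccursAt pUD (φ β) (k - (φ (α ++ [c + 1])).length) := by
                unfold OccursAt at hocc' ⊢
                rw [List.drop_append,
                  List.drop_of_length_le hk3, List.nil_append] at hocc'
                exact hocc'
              have hhtB : ((φ β).take (k - (φ (α ++ [c + 1])).length)).sum = 0 := by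
                rw [take_sum_append, take_of_le _ hk3, hCsum] at hht'
                linarith
              obtain ⟨j, hkj, hjocc⟩ := hBQ _ hoccB hhtB
              refine ⟨(φ (α ++ [c + 1])).length + j + 1 + 1, by omega, ?_⟩
              exact occursAt_cons (occursAt_cons (occursAt_append_right hjocc))

end Aux18

/-- For every Dyck excursion with catastrophes P of length n, every occurrence of the
factor UD starting at height 0 in φ(P) is followed, strictly later, by an occurrence
of UUU. -/
theorem stmt_18 (φ : List ℤ → List ℤ) (hφ : PhiSpec φ) (n : ℕ) (P : List ℤ)
    (hP : IsDyckExcursionCat P) (hn : P.length = n) :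
    ∀ i, OccursAt pUD (φ P) i → ((φ P).take i).sum = 0 →
      ∃ j, i < j ∧ OccursAt pUUU (φ P) j := by
  obtain ⟨-, -, -, -, hQ⟩ := Aux18.master φ hφ P.length P le_rfl hP
  exact hQ
end

section
/- For every Dyck meander with catastrophes P of length n+1 that decomposes as P = UαD_iβ with i ≥ 3 (α D_{i-1} ending on the x-axis), the Dyck path φ(P) starts with (UD)^k for some k ≥ 1 and contains an occurrence of the factor UUU starting at height 0. -/
lemma nil_meander : IsDyckMeanderCat ([] : List ℤ) := by
  refine ⟨by simp, ?_, by simp⟩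
  rw [nonnegPrefixes_iff]; simp

lemma firstHit (γ : List ℤ) (hsteps : ∀ s ∈ γ, s = 1 ∨ s = -1)
    (hlb : ∀ k, -1 ≤ (γ.take k).sum) (hneg : ∃ k, (γ.take k).sum < 0) :
    ∃ δ ε, γ = δ ++ -1 :: ε ∧ NonnegPrefixes δ ∧ δ.sum = 0 ∧
      (∀ s ∈ δ, s = 1 ∨ s = -1) ∧ (∀ s ∈ ε, s = 1 ∨ s = -1) ∧
      (∀ k, 0 ≤ (ε.take k).sum) := by
  classical
  have hn' : (γ.take (Nat.find hneg)).sum < 0 := Nat.find_spec hneg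
  have hmin : ∀ k < Nat.find hneg, 0 ≤ (γ.take k).sum := fun k hk =>
    le_of_not_gt (Nat.find_min hneg hk)
  have hn0 : Nat.find hneg ≠ 0 := by
    intro h; rw [h] at hn'; simp at hn'
  obtain ⟨d, hd⟩ : ∃ d, Nat.find hneg = d + 1 := ⟨Nat.find hneg - 1, by omega⟩
  rw [hd] at hn' hmin
  have hdlen : d < γ.length := by
    by_contra h
    push_neg at h
    have h1 : γ.take (d+1) = γ := List.take_of_length_le (by omega)
    have h2 : γ.take d = γ := List.take_of_length_le h
    have h3 := hmin d (by omega)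
    rw [h2] at h3; rw [h1] at hn'; omega
  have hsucc : (γ.take (d+1)).sum = (γ.take d).sum + γ[d] :=
    List.sum_take_succ _ _ hdlen
  have hstep : γ[d] = 1 ∨ γ[d] = -1 := hsteps _ (List.getElem_mem hdlen)
  have hd0 : 0 ≤ (γ.take d).sum := hmin d (by omega)
  have hlbd := hlb (d+1)
  have hgd : γ[d] = -1 := by rcases hstep with h | h <;> omega
  have hds : (γ.take d).sum = 0 := by omega
  have hsplit : γ = γ.take d ++ -1 :: γ.drop (d+1) := by
    conv_lhs => rw [← List.take_append_drop d γ]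
    rw [List.drop_eq_getElem_cons hdlen, hgd]
  refine ⟨γ.take d, γ.drop (d+1), hsplit, ?_, hds, ?_, ?_, ?_⟩
  · rw [nonnegPrefixes_iff]
    intro k
    rw [List.take_take]
    exact hmin _ (by omega)
  · intro s hs; exact hsteps s (List.mem_of_mem_take hs)
  · intro s hs; exact hsteps s (List.mem_of_mem_drop hs)
  · intro k
    have h1 : γ.take (d + 1 + k) = γ.take (d+1) ++ (γ.drop (d+1)).take k :=
      List.take_add
    have h2 := hlb (d + 1 + k)
    rw [h1, List.sum_append] at h2
    have h3 : (γ.take (d+1)).sum = -1 := by omega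
    omega

lemma head_one (γ : List ℤ) (hs : ∀ s ∈ γ, s = 1 ∨ s = -1)
    (hn : NonnegPrefixes γ) (hne : γ ≠ []) : ∃ γ', γ = 1 :: γ' := by
  obtain ⟨a, t, rfl⟩ := List.exists_cons_of_ne_nil hne
  have h1 : 0 ≤ ((a :: t).take 1).sum := (nonnegPrefixes_iff _).1 hn 1
  simp at h1
  rcases hs a (by simp) with h | h
  · exact ⟨t, by rw [h]⟩
  · omega

lemma tail_lb (γ' : List ℤ) (hn : NonnegPrefixes (1 :: γ')) :
    ∀ k, -1 ≤ (γ'.take k).sum := by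
  intro k
  have := (nonnegPrefixes_iff _).1 hn (k+1)
  simp [List.take_succ_cons] at this
  omega

lemma dyck_decomp_s19 (δ : List ℤ) (hs : ∀ s ∈ δ, s = 1 ∨ s = -1)
    (hn : NonnegPrefixes δ) (h0 : δ.sum = 0) (hne : δ ≠ []) :
    ∃ a b, δ = 1 :: (a ++ -1 :: b) ∧
      (∀ s ∈ a, s = 1 ∨ s = -1) ∧ NonnegPrefixes a ∧ a.sum = 0 ∧
      (∀ s ∈ b, s = 1 ∨ s = -1) ∧ NonnegPrefixes b ∧ b.sum = 0 := by
  obtain ⟨γ', rfl⟩ := head_one δ hs hn hne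
  have hs' : ∀ s ∈ γ', s = 1 ∨ s = -1 := fun s h => hs s (by simp [h])
  have hsum' : γ'.sum = -1 := by simp at h0; omega
  have hneg : ∃ k, (γ'.take k).sum < 0 :=
    ⟨γ'.length, by rw [List.take_of_length_le le_rfl, hsum']; omega⟩
  obtain ⟨a, b, heq, hna, ha0, hsa, hsb, hbk⟩ := firstHit γ' hs' (tail_lb γ' hn) hneg
  have hb0 : b.sum = 0 := by
    rw [heq] at hsum'; simp [List.sum_append] at hsum'; omega
  exact ⟨a, b, by rw [heq], hsa, hna, ha0, hsb, (nonnegPrefixes_iff _).2 hbk, hb0⟩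

lemma dyck_isMeander (b : List ℤ) (hs : ∀ s ∈ b, s = 1 ∨ s = -1)
    (hn : NonnegPrefixes b) : IsDyckMeanderCat b := by
  refine ⟨fun s hs' => (hs s hs').imp id (fun h => le_of_eq h), hn, ?_⟩
  intro i hi hle
  exfalso
  rw [List.getD_eq_getElem b 0 hi] at hle
  rcases hs _ (List.getElem_mem hi) with h | h <;> omega

lemma phi_dyck_eq (φ : List ℤ → List ℤ) (hφ : PhiSpec φ) (δ : List ℤ)
    (hs : ∀ s ∈ δ, s = 1 ∨ s = -1) (hn : NonnegPrefixes δ) (h0 : δ.sum = 0)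
    (hne : δ ≠ []) :
    ∃ a b, (∀ s ∈ a, s = 1 ∨ s = -1) ∧ NonnegPrefixes a ∧ a.sum = 0 ∧
      (∀ s ∈ b, s = 1 ∨ s = -1) ∧ NonnegPrefixes b ∧ b.sum = 0 ∧
      a.length + 2 ≤ δ.length ∧ b.length + 2 ≤ δ.length ∧
      φ δ = 1 :: 1 :: -1 :: (φ a ++ -1 :: φ b) := by
  obtain ⟨a, b, heq, hsa, hna, ha0, hsb, hnb, hb0⟩ := dyck_decomp_s19 δ hs hn h0 hne
  have hlen : δ.length = a.length + b.length + 2 := by rw [heq]; simp; omega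
  refine ⟨a, b, hsa, hna, ha0, hsb, hnb, hb0, by omega, by omega, ?_⟩
  rw [heq]
  exact hφ.2.2.1 a b hsa hna ha0 (dyck_isMeander b hsb hnb)

lemma phi_dyck_sum (φ : List ℤ → List ℤ) (hφ : PhiSpec φ) :
    ∀ N (δ : List ℤ), δ.length ≤ N → (∀ s ∈ δ, s = 1 ∨ s = -1) →
      NonnegPrefixes δ → δ.sum = 0 → (φ δ).sum = 0 := by
  intro N
  induction N with
  | zero =>
    intro δ hl _ _ _
    rw [List.eq_nil_of_length_eq_zero (Nat.le_zero.mp hl), hφ.1]; rfl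
  | succ N ih =>
    intro δ hl hs hn h0
    by_cases hne : δ = []
    · rw [hne, hφ.1]; rfl
    · obtain ⟨a, b, hsa, hna, ha0, hsb, hnb, hb0, hla, hlb, heq⟩ :=
        phi_dyck_eq φ hφ δ hs hn h0 hne
      have h1 := ih a (by omega) hsa hna ha0
      have h2 := ih b (by omega) hsb hnb hb0
      rw [heq]; simp [List.sum_append, h1, h2]

lemma occ_lift (p w s : List ℤ) (j : ℕ) (h : OccursAt pUUU w j) :
    OccursAt pUUU (p ++ (w ++ s)) (p.length + j) ∧
      ((p ++ (w ++ s)).take (p.length + j)).sum = p.sum + (w.take j).sum := by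
  have hlen := h.length_le
  rw [List.length_drop] at hlen
  have hp3 : pUUU.length = 3 := rfl
  have hj : j ≤ w.length := by omega
  constructor
  · unfold OccursAt at h ⊢
    rw [List.drop_length_add_append, List.drop_append_of_le_length hj]
    exact h.trans (List.prefix_append _ _)
  · rw [List.take_length_add_append, List.take_append_of_le_length hj, List.sum_append]

lemma meander_cat_single (ε : List ℤ) (m : ℕ) (hm : 2 ≤ m)
    (hs : ∀ s ∈ ε, s = 1 ∨ s = -1) (hk : ∀ k, 0 ≤ (ε.take k).sum)
    (hsum : ε.sum = (m : ℤ)) : IsDyckMeanderCat (ε ++ [-(m : ℤ)]) := by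
  refine ⟨?_, ?_, ?_⟩
  · intro s hs'
    rw [List.mem_append] at hs'
    rcases hs' with h | h
    · exact (hs s h).imp id (fun h' => le_of_eq h')
    · simp at h
      right; rw [h]
      have : (2 : ℤ) ≤ (m : ℤ) := by exact_mod_cast hm
      omega
  · rw [nonnegPrefixes_iff]
    intro k
    rcases le_or_gt k ε.length with h | h
    · rw [List.take_append_of_le_length h]; exact hk k
    · rw [List.take_of_length_le (by simp; omega)]
      simp [List.sum_append, hsum]
  · intro i hi hle
    simp at hi
    rcases lt_or_ge i ε.length with h | h
    · exfalso
      rw [List.getD_eq_getElem _ 0 (by simp; omega),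
        List.getElem_append_left h] at hle
      rcases hs _ (List.getElem_mem h) with h' | h' <;> omega
    · have hieq : i = ε.length := by omega
      rw [List.take_of_length_le (by simp; omega)]
      simp [List.sum_append, hsum]

lemma lemB (φ : List ℤ → List ℤ) (hφ : PhiSpec φ) :
    ∀ N (γ : List ℤ) (m : ℕ), γ.length ≤ N → 2 ≤ m →
      (∀ s ∈ γ, s = 1 ∨ s = -1) → NonnegPrefixes γ → γ.sum = (m : ℤ) →
      ∃ j, OccursAt pUUU (φ (γ ++ [-(m : ℤ)])) j ∧
        ((φ (γ ++ [-(m : ℤ)])).take j).sum = 0 := by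
  intro N
  induction N with
  | zero =>
    intro γ m hl hm hs hn hsum
    exfalso
    rw [List.eq_nil_of_length_eq_zero (Nat.le_zero.mp hl)] at hsum
    simp at hsum; omega
  | succ N ih =>
    intro γ m hl hm hs hn hsum
    have hne : γ ≠ [] := by
      intro h; rw [h] at hsum; simp at hsum; omega
    obtain ⟨γ', rfl⟩ := head_one γ hs hn hne
    have hs' : ∀ s ∈ γ', s = 1 ∨ s = -1 := fun s h => hs s (by simp [h])
    have hsum' : γ'.sum = (m : ℤ) - 1 := by simp at hsum; omega
    have hlen' : γ'.length ≤ N := by simp at hl; omega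
    by_cases hcase : ∀ k, 0 ≤ (γ'.take k).sum
    · -- no dip below level 1
      have hnγ' : NonnegPrefixes γ' := (nonnegPrefixes_iff _).2 hcase
      rcases eq_or_lt_of_le hm with hm2 | hm3
      · -- m = 2
        have hm2' : m = 2 := hm2.symm
        subst hm2'
        have hsum1 : γ'.sum = 1 := by omega
        have heq0 : (1 :: γ') ++ [-((2:ℕ) : ℤ)] = 1 :: (γ' ++ (-2) :: []) := by
          norm_num
        have heq := hφ.2.2.2.1 γ' [] hs' hnγ' hsum1 nil_meander
        -- γ' ++ [-1] is a nonempty Dyck word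
        have hsd : ∀ s ∈ γ' ++ [-1], s = 1 ∨ s = (-1 : ℤ) := by
          intro s h; rw [List.mem_append] at h
          rcases h with h | h
          · exact hs' s h
          · simp at h; right; exact h
        have hnd : NonnegPrefixes (γ' ++ [-1]) := by
          rw [nonnegPrefixes_iff]
          intro k
          rcases le_or_gt k γ'.length with h | h
          · rw [List.take_append_of_le_length h]; exact hcase k
          · rw [List.take_of_length_le (by simp; omega)]
            simp [List.sum_append, hsum1]
        have hd0 : (γ' ++ [-1]).sum = 0 := by simp [List.sum_append, hsum1]
        obtain ⟨a, b, _, _, _, _, _, _, _, _, heq2⟩ :=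
          phi_dyck_eq φ hφ (γ' ++ [-1]) hsd hnd hd0 (by simp)
        refine ⟨0, ?_, by simp⟩
        unfold OccursAt
        rw [heq0, heq, heq2, List.drop_zero]
        exact ⟨-1 :: (φ a ++ -1 :: φ b ++ -1 :: φ []), by simp [pUUU]⟩
      · -- m ≥ 3
        have hm3' : 3 ≤ m := hm3
        have hsumi : γ'.sum = ((m : ℕ) : ℤ) - 1 := hsum'
        have heq := hφ.2.2.2.2 γ' [] m hm3' hs' hnγ' hsumi nil_meander
        have hc1 : -(((m - 1 : ℕ)) : ℤ) = -((m : ℤ) - 1) := by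
          push_cast [Nat.cast_sub (by omega : 1 ≤ m)]; ring
        have hsum2 : γ'.sum = ((m - 1 : ℕ) : ℤ) := by
          push_cast [Nat.cast_sub (by omega : 1 ≤ m)]; omega
        obtain ⟨j, hocc, hsum0⟩ := ih γ' (m - 1) hlen' (by omega) hs' hnγ' hsum2
        rw [hc1] at hocc hsum0
        have heq0 : (1 :: γ') ++ [-((m:ℕ) : ℤ)] = 1 :: (γ' ++ (-((m:ℕ):ℤ)) :: []) := by
          simp
        have hres := occ_lift [1, -1] (φ (γ' ++ [-((m : ℤ) - 1)])) (φ []) j hocc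
        refine ⟨([1,-1] : List ℤ).length + j, ?_, ?_⟩
        · have : φ ((1 :: γ') ++ [-((m:ℕ) : ℤ)]) =
              [1, -1] ++ (φ (γ' ++ [-((m : ℤ) - 1)]) ++ φ []) := by
            rw [heq0, heq]; simp
          rw [this]; exact hres.1
        · have : φ ((1 :: γ') ++ [-((m:ℕ) : ℤ)]) =
              [1, -1] ++ (φ (γ' ++ [-((m : ℤ) - 1)]) ++ φ []) := by
            rw [heq0, heq]; simp
          rw [this, hres.2, hsum0]; simp
    · -- dip to -1 inside γ'
      push_neg at hcase
      obtain ⟨k0, hk0⟩ := hcase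
      obtain ⟨a, ε, heqd, hna, ha0, hsa, hse, hek⟩ :=
        firstHit γ' hs' (tail_lb γ' hn) ⟨k0, by omega⟩
      have hesum : ε.sum = (m : ℤ) := by
        rw [heqd] at hsum'; simp [List.sum_append] at hsum'; omega
      have hβ : IsDyckMeanderCat (ε ++ [-(m : ℤ)]) :=
        meander_cat_single ε m hm hse hek hesum
      have heq := hφ.2.2.1 a (ε ++ [-(m : ℤ)]) hsa hna ha0 hβ
      have heq0 : (1 :: γ') ++ [-((m:ℕ) : ℤ)] = 1 :: (a ++ -1 :: (ε ++ [-(m:ℤ)])) := by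
        rw [heqd]; simp
      have hεlen : ε.length ≤ N := by
        rw [heqd] at hlen'; simp at hlen'; omega
      obtain ⟨j, hocc, hsum0⟩ :=
        ih ε m hεlen hm hse ((nonnegPrefixes_iff _).2 hek) hesum
      have hφa : (φ a).sum = 0 := phi_dyck_sum φ hφ a.length a le_rfl hsa hna ha0
      have hres := occ_lift (1 :: 1 :: -1 :: (φ a ++ [-1]))
        (φ (ε ++ [-(m:ℤ)])) [] j hocc
      have hw : φ ((1 :: γ') ++ [-((m:ℕ) : ℤ)]) =
          (1 :: 1 :: -1 :: (φ a ++ [-1])) ++ (φ (ε ++ [-(m:ℤ)]) ++ []) := by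
        rw [heq0, heq]; simp
      refine ⟨(1 :: 1 :: -1 :: (φ a ++ [-1])).length + j, ?_, ?_⟩
      · rw [hw]; exact hres.1
      · rw [hw, hres.2, hsum0]
        simp [List.sum_append, hφa]

/-- If a Dyck meander with catastrophes P of length n+1 decomposes as P = UαD_iβ with
i ≥ 3 (and αD_{i-1} ending on the x-axis), then φ(P) starts with (UD)^k for some
k ≥ 1 and contains an occurrence of UUU starting at height 0. -/
theorem stmt_19 (φ : List ℤ → List ℤ) (hφ : PhiSpec φ) (n : ℕ)
    (α β P : List ℤ) (i : ℕ) (hi : 3 ≤ i)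
    (hα : ∀ s ∈ α, s = 1 ∨ s = -1) (hα' : NonnegPrefixes α)
    (hsum : α.sum = (i : ℤ) - 1) (hβ : IsDyckMeanderCat β)
    (hPdef : P = 1 :: (α ++ (-(i : ℤ)) :: β))
    (hP : IsDyckMeanderCat P) (hn : P.length = n + 1) :
    (∃ k : ℕ, 1 ≤ k ∧ (List.replicate k ([1, -1] : List ℤ)).flatten <+: φ P) ∧
    ∃ j, OccursAt pUUU (φ P) j ∧ ((φ P).take j).sum = 0 := by
  have heq := hφ.2.2.2.2 α β i hi hα hα' hsum hβ
  have hc1 : -(((i - 1 : ℕ)) : ℤ) = -((i : ℤ) - 1) := by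
    push_cast [Nat.cast_sub (by omega : 1 ≤ i)]; ring
  have hsum2 : α.sum = ((i - 1 : ℕ) : ℤ) := by
    push_cast [Nat.cast_sub (by omega : 1 ≤ i)]; omega
  obtain ⟨j, hocc, hsum0⟩ :=
    lemB φ hφ α.length α (i - 1) le_rfl (by omega) hα hα' hsum2
  rw [hc1] at hocc hsum0
  have hw : φ P = [1, -1] ++ (φ (α ++ [-((i : ℤ) - 1)]) ++ φ β) := by
    rw [hPdef, heq]; simp
  have hres := occ_lift [1, -1] (φ (α ++ [-((i : ℤ) - 1)])) (φ β) j hocc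
  refine ⟨⟨1, le_rfl, ?_⟩, ⟨([1,-1] : List ℤ).length + j, ?_, ?_⟩⟩
  · rw [hw]
    exact ⟨_, rfl⟩
  · rw [hw]; exact hres.1
  · rw [hw, hres.2, hsum0]; simp
end
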